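/- arXiv:1302.6863 — 3 statements merged into one kernel-verified Lean document; each statement's English description precedes it below -/
import Mathlib

section
/- For every function f : ℕ × ℕ → ℝ and every constant c ∈ ℕ there exists a real constant M (depending only on f and c) with the following property: for every finite simple graph G with local expansion bounded by f, and for every integer ℓ with 0 ≤ ℓ ≤ |V(G)|, every shallow minor H of G at depth c with at most ℓ vertices satisfies #ω(H) ≤ M·ℓ·|V(H)|; equivalently, clique-grad₀((G∇c)_{≤ℓ}) ≤ M·ℓ. -/
/-- `H` is a shallow minor of `G` at depth `d`. -/
def IsShallowMinorAtDepth {V W : Type*} (G : SimpleGraph V) (d : ℕ)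
    (H : SimpleGraph W) : Prop :=
  ∃ ψ : W → Set V,
    (∀ w, (ψ w).Nonempty) ∧
    (∀ w₁ w₂, w₁ ≠ w₂ → Disjoint (ψ w₁) (ψ w₂)) ∧
    (∀ w, ∃ c : ψ w, ∀ u : ψ w,
      ∃ p : (SimpleGraph.induce (ψ w) G).Walk c u, p.length ≤ d) ∧
    (∀ w₁ w₂, w₁ ≠ w₂ →
      (H.Adj w₁ w₂ ↔ ∃ v₁ ∈ ψ w₁, ∃ v₂ ∈ ψ w₂, G.Adj v₁ v₂))

/-- The greatest reduced average density (grad) of rank `d`. -/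
noncomputable def grad {V : Type*} (G : SimpleGraph V) (d : ℕ) : ℝ :=
  sSup { q : ℝ | ∃ (n : ℕ) (H : SimpleGraph (Fin n)), 0 < n ∧
    IsShallowMinorAtDepth G d H ∧ q = (H.edgeSet.ncard : ℝ) / (n : ℝ) }

/-- The closed ball of radius `a` around `v`: vertices reachable from `v`
by a walk of length at most `a`. -/
def closedBall {V : Type*} (G : SimpleGraph V) (v : V) (a : ℕ) : Set V :=
  {u | ∃ p : G.Walk v u, p.length ≤ a}

/-- `G` has local expansion bounded by `f`. -/
def LocalExpansionBoundedBy {V : Type*} (G : SimpleGraph V) (f : ℕ × ℕ → ℝ) : Prop :=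
  ∀ (a r : ℕ) (v : V), grad (SimpleGraph.induce (closedBall G v a) G) r ≤ f (a, r)

/-- `#ω(H)`: the number of nonempty cliques of `H`. -/
noncomputable def numCliques {W : Type*} (H : SimpleGraph W) : ℕ :=
  {s : Finset W | s.Nonempty ∧ H.IsClique (s : Set W)}.ncard

/-- `clique-grad₀((G∇d)_{≤ℓ})`: the supremum of `#ω(H)/|V(H)|` over nonempty shallow
minors of `G` at depth `d` having at most `ℓ` vertices. -/
noncomputable def cliqueGrad0Minors {V : Type*} (G : SimpleGraph V) (d ℓ : ℕ) : ℝ :=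
  sSup { q : ℝ | ∃ (n : ℕ) (H : SimpleGraph (Fin n)), 0 < n ∧ n ≤ ℓ ∧
    IsShallowMinorAtDepth G d H ∧ q = (numCliques H : ℝ) / (n : ℝ) }

section Aux

open SimpleGraph

lemma sm_congr {V W W' : Type*} {G : SimpleGraph V} {d : ℕ} {H : SimpleGraph W}
    {H' : SimpleGraph W'} (e : W' ≃ W) (hAdj : ∀ a b, H'.Adj a b ↔ H.Adj (e a) (e b))
    (h : IsShallowMinorAtDepth G d H) : IsShallowMinorAtDepth G d H' := by
  obtain ⟨ψ, hne, hdisj, hrad, hadj⟩ := h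
  refine ⟨fun w => ψ (e w), fun w => hne _, ?_, fun w => hrad _, ?_⟩
  · exact fun w₁ w₂ hw => hdisj _ _ fun h => hw (e.injective h)
  · intro w₁ w₂ hw
    rw [hAdj]
    exact hadj _ _ fun h => hw (e.injective h)

lemma sm_card_le {V : Type*} [Fintype V] {G : SimpleGraph V} {d n : ℕ}
    {H : SimpleGraph (Fin n)} (h : IsShallowMinorAtDepth G d H) : n ≤ Fintype.card V := by
  obtain ⟨ψ, hne, hdisj, -, -⟩ := h
  have hinj : Function.Injective (fun i : Fin n => (hne i).choose) := by
    intro i j hij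
    by_contra hij'
    have hij2 : (hne i).choose = (hne j).choose := hij
    exact (hdisj i j hij').ne_of_mem (hne i).choose_spec
      ((hne j).choose_spec) hij2
  simpa using Fintype.card_le_of_injective _ hinj

lemma grad_bddAbove {V : Type*} [Fintype V] (G : SimpleGraph V) (d : ℕ) :
    BddAbove { q : ℝ | ∃ (n : ℕ) (H : SimpleGraph (Fin n)), 0 < n ∧
      IsShallowMinorAtDepth G d H ∧ q = (H.edgeSet.ncard : ℝ) / (n : ℝ) } := by
  refine ⟨((Fintype.card V + 1).choose 2 : ℝ), ?_⟩
  rintro q ⟨n, H, hn, hsm, rfl⟩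
  have h1 : H.edgeSet.ncard ≤ (n + 1).choose 2 := by
    classical
    have := Set.ncard_le_ncard (Set.subset_univ H.edgeSet) Set.finite_univ
    simpa [Set.ncard_univ, Nat.card_eq_fintype_card, Sym2.card] using this
  have h2 : (n + 1).choose 2 ≤ (Fintype.card V + 1).choose 2 :=
    Nat.choose_le_choose _ (by have := sm_card_le hsm; omega)
  have hn1 : (1 : ℝ) ≤ (n : ℝ) := by exact_mod_cast hn
  have hle : (H.edgeSet.ncard : ℝ) / (n : ℝ) ≤ (H.edgeSet.ncard : ℝ) := by
    rw [div_le_iff₀ (by linarith)]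
    nlinarith [Nat.cast_nonneg (α := ℝ) H.edgeSet.ncard]
  exact hle.trans (by exact_mod_cast h1.trans h2)

lemma edge_le_of_sm {V : Type*} [Fintype V] {G : SimpleGraph V} {d n : ℕ}
    {H : SimpleGraph (Fin n)} (hn : 0 < n) (hsm : IsShallowMinorAtDepth G d H)
    {B : ℝ} (hB : grad G d ≤ B) : (H.edgeSet.ncard : ℝ) ≤ B * n := by
  have hmem : (H.edgeSet.ncard : ℝ) / (n : ℝ) ∈
      { q : ℝ | ∃ (n : ℕ) (H : SimpleGraph (Fin n)), 0 < n ∧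
        IsShallowMinorAtDepth G d H ∧ q = (H.edgeSet.ncard : ℝ) / (n : ℝ) } :=
    ⟨n, H, hn, hsm, rfl⟩
  have h := (le_csSup (grad_bddAbove G d) hmem).trans hB
  have hn' : (0 : ℝ) < (n : ℝ) := by exact_mod_cast hn
  rwa [div_le_iff₀ hn'] at h

@[reducible] def inducedHom {V : Type*} (G : SimpleGraph V) (s : Set V) : G.induce s →g G :=
  ⟨Subtype.val, fun {a b} h => by simpa [SimpleGraph.induce] using h⟩

def ballHom {V : Type*} (G : SimpleGraph V) (s : Set V) (B : Set V) (hsB : s ⊆ B) :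
    G.induce s →g (SimpleGraph.induce {x : ↥B | x.1 ∈ s} (G.induce B)) :=
  ⟨fun x => ⟨⟨x.1, hsB x.2⟩, x.2⟩, fun {a b} h => by simpa [SimpleGraph.induce] using h⟩

lemma master {V W : Type*} {G : SimpleGraph V} {c : ℕ} {H : SimpleGraph W}
    (ψ : W → Set V) (hne : ∀ w, (ψ w).Nonempty)
    (hdisj : ∀ w₁ w₂, w₁ ≠ w₂ → Disjoint (ψ w₁) (ψ w₂))
    (hrad : ∀ w, ∃ c0 : ψ w, ∀ u : ψ w,
      ∃ p : (SimpleGraph.induce (ψ w) G).Walk c0 u, p.length ≤ c)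
    (hadj : ∀ w₁ w₂, w₁ ≠ w₂ →
      (H.Adj w₁ w₂ ↔ ∃ v₁ ∈ ψ w₁, ∃ v₂ ∈ ψ w₂, G.Adj v₁ v₂))
    (w : W) (S : Set W) (hS : ∀ u ∈ S, u = w ∨ H.Adj w u) :
    ∃ v0 : V, IsShallowMinorAtDepth
      (SimpleGraph.induce (closedBall G v0 (3 * c + 1)) G) c (H.induce S) := by
  have inner : ∀ (u : W) (x y : ψ u), ∃ q : G.Walk x.1 y.1, q.length ≤ 2 * c := by
    intro u x y
    obtain ⟨cu, hcu⟩ := hrad u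
    obtain ⟨p1, hp1⟩ := hcu x
    obtain ⟨p2, hp2⟩ := hcu y
    refine ⟨(((p1.map (inducedHom G (ψ u))).reverse).append
      (p2.map (inducedHom G (ψ u)))).copy rfl rfl, ?_⟩
    simp only [Walk.length_copy, Walk.length_append, Walk.length_reverse, Walk.length_map]
    omega
  obtain ⟨c0, hc0⟩ := hrad w
  refine ⟨(c0 : V), ?_⟩
  have key : ∀ u, u ∈ S → ∀ y, y ∈ ψ u → y ∈ closedBall G (c0 : V) (3 * c + 1) := by
    intro u hu y hy
    rcases hS u hu with rfl | hadjwu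
    · obtain ⟨p, hp⟩ := hc0 ⟨y, hy⟩
      refine ⟨(p.map (inducedHom G (ψ u))).copy rfl rfl, ?_⟩
      simp only [Walk.length_copy, Walk.length_map]
      omega
    · obtain ⟨x, hx, y0, hy0, hxy⟩ := (hadj w u hadjwu.ne).mp hadjwu
      obtain ⟨p1, hp1⟩ := hc0 ⟨x, hx⟩
      obtain ⟨p3, hp3⟩ := inner u ⟨y0, hy0⟩ ⟨y, hy⟩
      refine ⟨((p1.map (inducedHom G (ψ w))).copy rfl rfl).append
        ((Walk.cons hxy Walk.nil).append p3), ?_⟩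
      simp only [Walk.length_append, Walk.length_copy, Walk.length_map,
        Walk.length_cons, Walk.length_nil]
      omega
  set B : Set V := closedBall G (c0 : V) (3 * c + 1) with hB
  have hsub : ∀ u, u ∈ S → ψ u ⊆ B := fun u hu y hy => key u hu y hy
  refine ⟨fun u => {x : ↥B | x.1 ∈ ψ u.1}, ?_, ?_, ?_, ?_⟩
  · intro u
    obtain ⟨y, hy⟩ := hne u.1
    exact ⟨⟨y, hsub u.1 u.2 hy⟩, hy⟩
  · intro u1 u2 hne'
    have hvne : (u1 : W) ≠ (u2 : W) := fun h => hne' (Subtype.ext h)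
    rw [Set.disjoint_left]
    intro x hx1 hx2
    exact absurd rfl ((hdisj _ _ hvne).ne_of_mem hx1 hx2)
  · intro u
    obtain ⟨cu, hcu⟩ := hrad u.1
    refine ⟨ballHom G (ψ u.1) B (hsub u.1 u.2) cu, fun t => ?_⟩
    obtain ⟨p, hp⟩ := hcu ⟨t.1.1, t.2⟩
    refine ⟨(p.map (ballHom G (ψ u.1) B (hsub u.1 u.2))).copy rfl
      (Subtype.ext (Subtype.ext rfl)), ?_⟩
    simp only [Walk.length_copy, Walk.length_map]
    omega
  · intro u1 u2 hne'
    have hvne : (u1 : W) ≠ (u2 : W) := fun h => hne' (Subtype.ext h)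
    have hiff := hadj u1.1 u2.1 hvne
    constructor
    · intro hadj'
      obtain ⟨v1, hv1, v2, hv2, hGadj⟩ := hiff.mp (by simpa [SimpleGraph.induce] using hadj')
      exact ⟨⟨v1, hsub _ u1.2 hv1⟩, hv1, ⟨v2, hsub _ u2.2 hv2⟩, hv2,
        by simpa [SimpleGraph.induce] using hGadj⟩
    · rintro ⟨x1, hx1, x2, hx2, hadj''⟩
      have hg : G.Adj x1.1 x2.1 := by simpa [SimpleGraph.induce] using hadj''
      have hH : H.Adj u1.1 u2.1 := hiff.mpr ⟨x1.1, hx1, x2.1, hx2, hg⟩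
      simpa [SimpleGraph.induce] using hH

lemma exists_small_deg {V : Type*} [Fintype V] {G : SimpleGraph V} {c n : ℕ}
    {H : SimpleGraph (Fin n)} {f : ℕ × ℕ → ℝ}
    (hexp : LocalExpansionBoundedBy G f) (hsm : IsShallowMinorAtDepth G c H)
    (w : Fin n) (s : Finset (Fin n)) (hs : ∀ u ∈ s, u = w ∨ H.Adj w u) (hsne : s.Nonempty) :
    ∃ u ∈ s, ({x | x ∈ s ∧ H.Adj u x}.ncard : ℝ) ≤ 2 * max 0 (f (3 * c + 1, c)) := by
  classical
  obtain ⟨ψ, hne, hdisj, hrad, hadj⟩ := hsm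
  obtain ⟨v0, hsm'⟩ := master ψ hne hdisj hrad hadj w (↑s)
    (fun u hu => hs u (by simpa using hu))
  set m := s.card with hm
  have hm0 : 0 < m := Finset.card_pos.mpr hsne
  set e : Fin m ≃ ↥(↑s : Set (Fin n)) :=
    ((Equiv.subtypeEquivRight (fun x => Finset.mem_coe)).trans s.equivFin).symm with he
  set H'' : SimpleGraph (Fin m) :=
    SimpleGraph.comap (fun i => e i) (H.induce (↑s : Set (Fin n))) with hH''
  have hsm'' : IsShallowMinorAtDepth
      (SimpleGraph.induce (closedBall G v0 (3 * c + 1)) G) c H'' :=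
    sm_congr e (fun a b => Iff.rfl) hsm'
  haveI : Fintype ↥(closedBall G v0 (3 * c + 1)) := (Set.toFinite _).fintype
  have hgrad : grad (SimpleGraph.induce (closedBall G v0 (3 * c + 1)) G) c ≤ f (3 * c + 1, c) :=
    hexp (3 * c + 1) c v0
  have hedge : (H''.edgeSet.ncard : ℝ) ≤ max 0 (f (3 * c + 1, c)) * m :=
    edge_le_of_sm hm0 hsm'' (hgrad.trans (le_max_right _ _))
  have hsum : ∑ i : Fin m, H''.degree i = 2 * H''.edgeFinset.card :=
    H''.sum_degrees_eq_twice_card_edges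
  have hcard : H''.edgeFinset.card = H''.edgeSet.ncard := (Set.ncard_eq_toFinset_card' _).symm
  have h2 : ((∑ i : Fin m, H''.degree i : ℕ) : ℝ) ≤ (m : ℝ) * (2 * max 0 (f (3 * c + 1, c))) := by
    rw [hsum, hcard]; push_cast; linarith [hedge]
  haveI : Nonempty (Fin m) := ⟨⟨0, hm0⟩⟩
  have hex : ∃ i ∈ (Finset.univ : Finset (Fin m)),
      (H''.degree i : ℝ) ≤ 2 * max 0 (f (3 * c + 1, c)) := by
    apply Finset.exists_le_of_sum_le Finset.univ_nonempty
    rw [Finset.sum_const, Finset.card_univ, Fintype.card_fin, nsmul_eq_mul, ← Nat.cast_sum]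
    exact h2
  obtain ⟨i, -, hi⟩ := hex
  refine ⟨(e i).1, (e i).2, ?_⟩
  have hdeg : {x | x ∈ s ∧ H.Adj (e i).1 x}.ncard = H''.degree i := by
    have hset : {x | x ∈ s ∧ H.Adj (e i).1 x} =
        ↑(s.filter (fun x => H.Adj (e i).1 x)) := by ext x; simp
    rw [hset, Set.ncard_coe_finset]
    show _ = (H''.neighborFinset i).card
    apply Finset.card_bij (fun x hx => e.symm
      ⟨x, Finset.mem_coe.mpr (Finset.mem_filter.mp hx).1⟩)
    · intro x hx
      rw [SimpleGraph.mem_neighborFinset]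
      have hadjx : H.Adj (e i).1 x := (Finset.mem_filter.mp hx).2
      show (H.induce (↑s : Set (Fin n))).Adj (e i) (e (e.symm _))
      rw [e.apply_symm_apply]
      simpa [SimpleGraph.induce] using hadjx
    · intro x1 hx1 x2 hx2 hxx
      have := e.symm.injective hxx
      exact congrArg Subtype.val this
    · intro j hj
      have hadjj : H''.Adj i j := (SimpleGraph.mem_neighborFinset _ _ _).mp hj
      have hadjj' : H.Adj (e i).1 (e j).1 := by
        simpa [hH'', SimpleGraph.induce] using hadjj
      refine ⟨(e j).1, Finset.mem_filter.mpr ⟨(e j).2, hadjj'⟩, ?_⟩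
      rw [show (⟨(e j).1, _⟩ : ↥(↑s : Set (Fin n))) = e j from Subtype.ext rfl,
        e.symm_apply_apply]
  rw [hdeg]
  exact hi

lemma clique_count {n : ℕ} (H : SimpleGraph (Fin n)) (D : ℕ) :
    ∀ t : Finset (Fin n),
      (∀ s : Finset (Fin n), s ⊆ t → s.Nonempty →
        ∃ u ∈ s, {x | x ∈ s ∧ H.Adj u x}.ncard ≤ D) →
      {s : Finset (Fin n) | s.Nonempty ∧ H.IsClique ↑s ∧ s ⊆ t}.ncard ≤ t.card * 2 ^ D := by
  classical
  intro t
  induction t using Finset.strongInduction with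
  | _ t ih =>
    intro hmin
    have hFeq : ∀ (t' : Finset (Fin n)),
        {s : Finset (Fin n) | s.Nonempty ∧ H.IsClique ↑s ∧ s ⊆ t'} =
        (((Finset.univ : Finset (Finset (Fin n))).filter
            (fun (s : Finset (Fin n)) => s.Nonempty ∧ H.IsClique ↑s ∧ s ⊆ t') :
          Finset (Finset (Fin n))) : Set (Finset (Fin n))) := by
      intro t'; ext s; simp
    rcases t.eq_empty_or_nonempty with rfl | htne
    · have hempty : {s : Finset (Fin n) | s.Nonempty ∧ H.IsClique ↑s ∧ s ⊆ (∅ : Finset (Fin n))}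
          = ∅ := by
        ext s
        simp only [Set.mem_setOf_eq, Set.mem_empty_iff_false, iff_false, not_and]
        intro hne' _ hsub
        rw [Finset.subset_empty] at hsub
        subst hsub
        exact absurd hne' (by simp)
      rw [hempty]
      simp
    · obtain ⟨u, hu, hN⟩ := hmin t Finset.Subset.rfl htne
      set N : Finset (Fin n) := t.filter (fun x => H.Adj u x) with hNdef
      have hNcard : N.card ≤ D := by
        have hNset : {x | x ∈ t ∧ H.Adj u x} = ↑N := by ext x; simp [hNdef]
        rwa [hNset, Set.ncard_coe_finset] at hN
      rw [hFeq, Set.ncard_coe_finset]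
      set F : Finset (Finset (Fin n)) := (Finset.univ : Finset (Finset (Fin n))).filter
        (fun (s : Finset (Fin n)) => s.Nonempty ∧ H.IsClique ↑s ∧ s ⊆ t) with hF
      have hsplit : (F.filter (fun (s : Finset (Fin n)) => u ∈ s)).card
          + (F.filter (fun (s : Finset (Fin n)) => ¬ u ∈ s)).card = F.card :=
        Finset.card_filter_add_card_filter_not _
      have hBle : (F.filter (fun (s : Finset (Fin n)) => u ∈ s)).card ≤ 2 ^ D := by
        have hinj : (F.filter (fun (s : Finset (Fin n)) => u ∈ s)).card ≤ N.powerset.card := by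
          apply Finset.card_le_card_of_injOn (fun s => s.erase u)
          · intro s hs
            simp only [hF, Finset.mem_coe, Finset.mem_filter, Finset.mem_univ, true_and] at hs ⊢
            obtain ⟨⟨hne', hclique, hsubt⟩, hus⟩ := hs
            rw [Finset.mem_powerset]
            intro x hx
            have hxs := Finset.mem_of_mem_erase hx
            have hxu := Finset.ne_of_mem_erase hx
            rw [hNdef, Finset.mem_filter]
            exact ⟨hsubt hxs, hclique (Finset.mem_coe.mpr hus) (Finset.mem_coe.mpr hxs)
              (Ne.symm hxu)⟩
          · intro s1 hs1 s2 hs2 hss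
            simp only [Finset.mem_coe, hF, Finset.mem_filter, Finset.mem_univ, true_and] at hs1 hs2
            simp only at hss
            rw [← Finset.insert_erase hs1.2, ← Finset.insert_erase hs2.2, hss]
        calc (F.filter (fun (s : Finset (Fin n)) => u ∈ s)).card ≤ N.powerset.card := hinj
          _ = 2 ^ N.card := Finset.card_powerset N
          _ ≤ 2 ^ D := Nat.pow_le_pow_right (by norm_num) hNcard
      have hAle : (F.filter (fun (s : Finset (Fin n)) => ¬ u ∈ s)).card
          ≤ (t.erase u).card * 2 ^ D := by
        have hsubF : F.filter (fun (s : Finset (Fin n)) => ¬ u ∈ s) ⊆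
            (Finset.univ : Finset (Finset (Fin n))).filter
              (fun (s : Finset (Fin n)) => s.Nonempty ∧ H.IsClique ↑s ∧ s ⊆ t.erase u) := by
          intro s hs
          simp only [hF, Finset.mem_filter, Finset.mem_univ, true_and] at hs ⊢
          obtain ⟨⟨hne', hclique, hsubt⟩, hus⟩ := hs
          exact ⟨hne', hclique, fun x hx =>
            Finset.mem_erase.mpr ⟨fun h => hus (h ▸ hx), hsubt hx⟩⟩
        have hih := ih (t.erase u) (Finset.erase_ssubset hu)
          (fun s hsub hsne => hmin s (hsub.trans (Finset.erase_subset u t)) hsne)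
        rw [hFeq, Set.ncard_coe_finset] at hih
        exact (Finset.card_le_card hsubF).trans hih
      have ht1 : 1 ≤ t.card := Finset.card_pos.mpr htne
      obtain ⟨k, hk⟩ : ∃ k, t.card = k + 1 := ⟨t.card - 1, by omega⟩
      have herase : (t.erase u).card = k := by
        rw [Finset.card_erase_of_mem hu, hk]
        omega
      calc F.card = (F.filter (fun (s : Finset (Fin n)) => u ∈ s)).card
            + (F.filter (fun (s : Finset (Fin n)) => ¬ u ∈ s)).card := hsplit.symm
        _ ≤ 2 ^ D + k * 2 ^ D := by
            rw [herase] at hAle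
            omega
        _ = t.card * 2 ^ D := by rw [hk]; ring

end Aux

/-- For every local-expansion bound `f` and depth `c` there is a constant `M` such
that for every graph `G` with local expansion bounded by `f` and every
`ℓ ≤ |V(G)|`, every shallow minor `H` of `G` at depth `c` with at most `ℓ` vertices
satisfies `#ω(H) ≤ M·ℓ·|V(H)|`; equivalently `clique-grad₀((G∇c)_{≤ℓ}) ≤ M·ℓ`. -/
theorem cliqueGrad_locally_bounded_expansion (f : ℕ × ℕ → ℝ) (c : ℕ) :
    ∃ M : ℝ, ∀ (V : Type) [Fintype V] (G : SimpleGraph V),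
      LocalExpansionBoundedBy G f →
      ∀ ℓ : ℕ, ℓ ≤ Fintype.card V →
        (∀ (n : ℕ) (H : SimpleGraph (Fin n)), n ≤ ℓ →
          IsShallowMinorAtDepth G c H →
          (numCliques H : ℝ) ≤ M * (ℓ : ℝ) * (n : ℝ)) ∧
        cliqueGrad0Minors G c ℓ ≤ M * (ℓ : ℝ) := by
  classical
  set D : ℕ := ⌊2 * max 0 (f (3 * c + 1, c))⌋₊ with hD
  refine ⟨(2 : ℝ) ^ D, ?_⟩
  intro V _ G hexp ℓ hℓ
  have main : ∀ (n : ℕ) (H : SimpleGraph (Fin n)), n ≤ ℓ → IsShallowMinorAtDepth G c H →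
      (numCliques H : ℝ) ≤ (2 : ℝ) ^ D * (ℓ : ℝ) * (n : ℝ) := by
    intro n H hnl hsm
    have hFeq : ∀ (t' : Finset (Fin n)),
        {s : Finset (Fin n) | s.Nonempty ∧ H.IsClique ↑s ∧ s ⊆ t'} =
        (((Finset.univ : Finset (Finset (Fin n))).filter
            (fun (s : Finset (Fin n)) => s.Nonempty ∧ H.IsClique ↑s ∧ s ⊆ t') :
          Finset (Finset (Fin n))) : Set (Finset (Fin n))) := by
      intro t'; ext s; simp
    set F : Finset (Finset (Fin n)) := (Finset.univ : Finset (Finset (Fin n))).filter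
      (fun (s : Finset (Fin n)) => s.Nonempty ∧ H.IsClique ↑s) with hF
    have hnum : numCliques H = F.card := by
      have hset : {s : Finset (Fin n) | s.Nonempty ∧ H.IsClique (↑s : Set (Fin n))}
          = ((F : Finset (Finset (Fin n))) : Set (Finset (Fin n))) := by
        ext s; simp [hF]
      rw [numCliques, hset, Set.ncard_coe_finset]
    have hsub : F ⊆ Finset.univ.biUnion (fun (w : Fin n) =>
        F.filter (fun (s : Finset (Fin n)) => w ∈ s)) := by
      intro s hs
      have hne' : s.Nonempty := (Finset.mem_filter.mp hs).2.1
      obtain ⟨w, hw⟩ := hne'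
      exact Finset.mem_biUnion.mpr ⟨w, Finset.mem_univ _, Finset.mem_filter.mpr ⟨hs, hw⟩⟩
    have hcard1 : F.card ≤ ∑ w : Fin n, (F.filter (fun (s : Finset (Fin n)) => w ∈ s)).card :=
      (Finset.card_le_card hsub).trans Finset.card_biUnion_le
    have hper : ∀ w : Fin n,
        (F.filter (fun (s : Finset (Fin n)) => w ∈ s)).card ≤ n * 2 ^ D := by
      intro w
      set tw : Finset (Fin n) := Finset.univ.filter (fun x => x = w ∨ H.Adj w x) with htw
      have hsubw : F.filter (fun (s : Finset (Fin n)) => w ∈ s) ⊆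
          (Finset.univ : Finset (Finset (Fin n))).filter
            (fun (s : Finset (Fin n)) => s.Nonempty ∧ H.IsClique ↑s ∧ s ⊆ tw) := by
        intro s hs
        simp only [hF, Finset.mem_filter, Finset.mem_univ, true_and] at hs ⊢
        obtain ⟨⟨hne', hclique⟩, hws⟩ := hs
        refine ⟨hne', hclique, fun x hx => Finset.mem_filter.mpr ⟨Finset.mem_univ _, ?_⟩⟩
        by_cases hxw : x = w
        · exact Or.inl hxw
        · exact Or.inr (hclique (Finset.mem_coe.mpr hws) (Finset.mem_coe.mpr hx)
            (fun h => hxw h.symm))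
      have hmin : ∀ s : Finset (Fin n), s ⊆ tw → s.Nonempty →
          ∃ u ∈ s, {x | x ∈ s ∧ H.Adj u x}.ncard ≤ D := by
        intro s hsubtw hsne
        have hs' : ∀ u ∈ s, u = w ∨ H.Adj w u := by
          intro u hus
          have := hsubtw hus
          simpa [htw] using this
        obtain ⟨u, hus, hcardle⟩ := exists_small_deg hexp hsm w s hs' hsne
        exact ⟨u, hus, Nat.le_floor hcardle⟩
      have hcc := clique_count H D tw hmin
      rw [hFeq, Set.ncard_coe_finset] at hcc
      have htwn : tw.card ≤ n := by
        calc tw.card ≤ (Finset.univ : Finset (Fin n)).card := Finset.card_le_univ _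
          _ = n := by simp
      calc (F.filter (fun (s : Finset (Fin n)) => w ∈ s)).card
          ≤ ((Finset.univ : Finset (Finset (Fin n))).filter
              (fun (s : Finset (Fin n)) => s.Nonempty ∧ H.IsClique ↑s ∧ s ⊆ tw)).card :=
            Finset.card_le_card hsubw
        _ ≤ tw.card * 2 ^ D := hcc
        _ ≤ n * 2 ^ D := Nat.mul_le_mul_right _ htwn
    have htotal : F.card ≤ n * (n * 2 ^ D) := by
      calc F.card ≤ ∑ w : Fin n, (F.filter (fun (s : Finset (Fin n)) => w ∈ s)).card := hcard1
        _ ≤ ∑ _w : Fin n, n * 2 ^ D := Finset.sum_le_sum (fun w _ => hper w)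
        _ = n * (n * 2 ^ D) := by simp [Finset.sum_const, mul_comm]
    have hcast : (numCliques H : ℝ) ≤ (n : ℝ) * ((n : ℝ) * (2 : ℝ) ^ D) := by
      rw [hnum]
      exact_mod_cast htotal
    have hnℓ : (n : ℝ) ≤ (ℓ : ℝ) := by exact_mod_cast hnl
    have h2D : (0 : ℝ) ≤ (2 : ℝ) ^ D := by positivity
    have hstep : (2 : ℝ) ^ D * (n : ℝ) * (n : ℝ) ≤ (2 : ℝ) ^ D * (ℓ : ℝ) * (n : ℝ) :=
      mul_le_mul_of_nonneg_right (mul_le_mul_of_nonneg_left hnℓ h2D) (Nat.cast_nonneg n)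
    have heq : (n : ℝ) * ((n : ℝ) * (2 : ℝ) ^ D) = (2 : ℝ) ^ D * (n : ℝ) * (n : ℝ) := by ring
    linarith
  refine ⟨fun n H hnl hsm => main n H hnl hsm, ?_⟩
  unfold cliqueGrad0Minors
  apply Real.sSup_le
  · rintro q ⟨n, H, hn, hnl, hsm, rfl⟩
    have h1 := main n H hnl hsm
    have hn' : (0 : ℝ) < (n : ℝ) := by exact_mod_cast hn
    rw [div_le_iff₀ hn']
    calc (numCliques H : ℝ) ≤ (2 : ℝ) ^ D * (ℓ : ℝ) * (n : ℝ) := h1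
      _ = (2 : ℝ) ^ D * (ℓ : ℝ) * (n : ℝ) := rfl
  · positivity
end

section
/- For all t, d ∈ ℕ, the Longest Path problem has finite integer index on graphs of treedepth at most d: there exists a finite set 𝓡 of t-boundaried graphs such that every t-boundaried graph G whose underlying graph has treedepth at most d satisfies G ≡_{LP,t} R for some R ∈ 𝓡. -/
/-- `td(G) ≤ h`: there is a rooted forest on `V(G)` (given by a parent function together
with a consistent depth function) of height at most `h` such that every edge of `G`
joins two vertices in ancestor–descendant relation. -/
def treedepthLE {V : Type*} (G : SimpleGraph V) (h : ℕ) : Prop :=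
  ∃ (par : V → V) (dep : V → ℕ),
    (∀ v, (par v = v → dep v = 1) ∧ (par v ≠ v → dep v = dep (par v) + 1)) ∧
    (∀ v, dep v ≤ h) ∧
    (∀ u w, G.Adj u w → (∃ n, par^[n] w = u) ∨ (∃ n, par^[n] u = w))

/-- A `t`-boundaried graph: a finite simple graph with `t` distinguished vertices
labeled injectively by `1,…,t`. -/
structure BGraph (t : ℕ) : Type 1 where
  V : Type
  fin : Fintype V
  G : SimpleGraph V
  b : Fin t → V
  binj : Function.Injective b

/-- The underlying relation of the glued graph `G₁ ⊕ G₂`: vertices are the vertices of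
`G₁` together with the non-boundary vertices of `G₂`; the boundary of `G₂` is
identified label-wise with the boundary of `G₁`. -/
def glueAdj {t : ℕ} (G₁ G₂ : BGraph t) :
    G₁.V ⊕ {v : G₂.V // v ∉ Set.range G₂.b} →
    G₁.V ⊕ {v : G₂.V // v ∉ Set.range G₂.b} → Prop
  | Sum.inl u, Sum.inl v =>
      G₁.G.Adj u v ∨ ∃ i j, u = G₁.b i ∧ v = G₁.b j ∧ G₂.G.Adj (G₂.b i) (G₂.b j)
  | Sum.inl u, Sum.inr v => ∃ i, u = G₁.b i ∧ G₂.G.Adj (G₂.b i) v.1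
  | Sum.inr _, Sum.inl _ => False
  | Sum.inr u, Sum.inr v => G₂.G.Adj u.1 v.1

/-- The glued graph `G₁ ⊕ G₂`. -/
def glue {t : ℕ} (G₁ G₂ : BGraph t) :
    SimpleGraph (G₁.V ⊕ {v : G₂.V // v ∉ Set.range G₂.b}) :=
  SimpleGraph.fromRel (glueAdj G₁ G₂)

/-- `G` contains a simple path with at least `ℓ` edges. -/
def HasPathGE {W : Type*} (G : SimpleGraph W) (ℓ : ℤ) : Prop :=
  ∃ (u v : W) (p : G.Walk u v), p.IsPath ∧ ℓ ≤ (p.length : ℤ)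

/-- Equivalence of `t`-boundaried graphs for the Longest Path problem. -/
def LPEquiv {t : ℕ} (G₁ G₂ : BGraph t) : Prop :=
  ∃ Δ : ℤ, ∀ (H : BGraph t) (ℓ : ℤ),
    HasPathGE (glue G₁ H) ℓ ↔ HasPathGE (glue G₂ H) (ℓ + Δ)


namespace FIILP
open List

section Forest
variable {V : Type*} {par : V → V} {dep : V → ℕ}
  (hpd : ∀ v, (par v = v → dep v = 1) ∧ (par v ≠ v → dep v = dep (par v) + 1))

/-- ancestor relation -/
def Anc (par : V → V) (u x : V) : Prop := ∃ n, par^[n] x = u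

include hpd

lemma dep_par_le (x : V) : dep (par x) ≤ dep x := by
  by_cases h : par x = x
  · rw [h]
  · rw [(hpd x).2 h]; omega

lemma dep_iterate_le (k : ℕ) (x : V) : dep (par^[k] x) ≤ dep x := by
  induction k generalizing x with
  | zero => simp
  | succ k ih =>
      rw [Function.iterate_succ_apply]
      exact le_trans (ih (par x)) (dep_par_le hpd x)

lemma iterate_eq_of_dep_eq (c : ℕ) (v : V) (h : dep (par^[c] v) = dep v) : par^[c] v = v := by
  induction c generalizing v with
  | zero => rfl
  | succ c ih =>
      by_cases hf : par v = v
      · exact Function.iterate_fixed hf _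
      · exfalso
        have h1 : dep v = dep (par v) + 1 := (hpd v).2 hf
        have h2 : dep (par^[c] (par v)) ≤ dep (par v) := dep_iterate_le hpd c (par v)
        rw [Function.iterate_succ_apply] at h
        omega

omit hpd in
lemma anc_trans {v z u : V} (h1 : Anc par v z) (h2 : Anc par z u) : Anc par v u := by
  obtain ⟨n, hn⟩ := h2; obtain ⟨m, hm⟩ := h1
  exact ⟨m + n, by rw [Function.iterate_add_apply, hn, hm]⟩

lemma anc_dep_le {v u : V} (h : Anc par v u) : dep v ≤ dep u := by
  obtain ⟨n, hn⟩ := h; rw [← hn]; exact dep_iterate_le hpd n u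

lemma anc_of_anc_anc {u v z : V} (hu : Anc par u z) (hv : Anc par v z)
    (hle : dep v ≤ dep u) : Anc par v u := by
  obtain ⟨a, ha⟩ := hu; obtain ⟨b, hb⟩ := hv
  rcases le_or_gt a b with h | h
  · refine ⟨b - a, ?_⟩
    rw [← ha, ← Function.iterate_add_apply, Nat.sub_add_cancel h, hb]
  · have hu' : par^[a - b] v = u := by
      rw [← hb, ← Function.iterate_add_apply, Nat.sub_add_cancel h.le, ha]
    have : dep u ≤ dep v := by rw [← hu']; exact dep_iterate_le hpd _ v
    have hdep : dep (par^[a-b] v) = dep v := by rw [hu']; omega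
    have := iterate_eq_of_dep_eq hpd _ _ hdep
    rw [this] at hu'
    exact ⟨0, hu'.symm⟩

lemma anc_strict_dep {v u : V} (h : Anc par v u) (hne : u ≠ v) : dep v + 1 ≤ dep u := by
  obtain ⟨n, hn⟩ := h
  have h1 : dep v ≤ dep u := by rw [← hn]; exact dep_iterate_le hpd n u
  rcases eq_or_lt_of_le h1 with he | hlt
  · exfalso
    have := iterate_eq_of_dep_eq hpd n u (by rw [hn, he])
    rw [this] at hn; exact hne hn
  · omega

/-- comparability -/
def Cmp (par : V → V) (x y : V) : Prop := Anc par x y ∨ Anc par y x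

omit hpd in
lemma cmp_symm {x y : V} (h : Cmp par x y) : Cmp par y x := h.symm

lemma forward_anc {v : V} :
    ∀ l : List V, l.Chain' (Cmp par) → (∀ u ∈ l, dep v ≤ dep u) →
      (∀ x ∈ l.head?, Anc par v x) → ∀ u ∈ l, Anc par v u := by
  intro l
  induction l with
  | nil => intro _ _ _ u hu; simp at hu
  | cons x l ih =>
      intro hc hmin hh u hu
      have hvx : Anc par v x := hh x rfl
      rw [List.Chain', List.isChain_cons] at hc
      rcases List.mem_cons.mp hu with rfl | hu'
      · exact hvx
      · refine ih hc.2 (fun u hu => hmin u (List.mem_cons_of_mem _ hu)) ?_ u hu'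
        intro y hy
        rcases hc.1 y hy with h | h
        · exact anc_trans hvx h
        · exact anc_of_anc_anc hpd h hvx (hmin y (List.mem_cons_of_mem _ (List.mem_of_mem_head? hy)))

end Forest

section TDBound
variable {V : Type*} {par : V → V} {dep : V → ℕ}

lemma exists_min_dep (dep : V → ℕ) :
    ∀ (l : List V), l ≠ [] → ∃ v ∈ l, ∀ u ∈ l, dep v ≤ dep u := by
  intro l
  induction l with
  | nil => simp
  | cons x l ih =>
      intro _
      rcases eq_or_ne l [] with rfl | hne
      · exact ⟨x, by simp, by simp⟩
      · obtain ⟨v, hv, hmin⟩ := ih hne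
        rcases le_or_gt (dep x) (dep v) with h | h
        · refine ⟨x, by simp, ?_⟩
          intro u hu
          rcases List.mem_cons.mp hu with rfl | hu'
          · exact le_refl _
          · exact le_trans h (hmin u hu')
        · refine ⟨v, List.mem_cons_of_mem _ hv, ?_⟩
          intro u hu
          rcases List.mem_cons.mp hu with rfl | hu'
          · exact h.le
          · exact hmin u hu'

lemma td_core (hpd : ∀ v, (par v = v → dep v = 1) ∧ (par v ≠ v → dep v = dep (par v) + 1))
    (d : ℕ) (hdep : ∀ v, dep v ≤ d) :
    ∀ (N : ℕ) (l : List V), l.length ≤ N → l.Chain' (Cmp par) → l.Nodup →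
      ∀ m, (∀ u ∈ l, m ≤ dep u) → l.length + 1 ≤ 2 ^ (d + 1 - m) := by
  intro N
  induction N with
  | zero =>
      intro l hl _ _ m _
      have : l.length = 0 := by omega
      rw [this]
      simpa using Nat.one_le_two_pow
  | succ N ih =>
      intro l hl hc hnd m hm
      rcases eq_or_ne l [] with rfl | hne
      · simpa using Nat.one_le_two_pow
      obtain ⟨v, hvl, hvmin⟩ := exists_min_dep dep l hne
      obtain ⟨l₁, l₂, rfl⟩ := List.append_of_mem hvl
      -- chain facts
      have hc1 : (l₁).Chain' (Cmp par) := (List.isChain_append.mp hc).1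
      have hc2 : (v :: l₂).Chain' (Cmp par) := (List.isChain_append.mp hc).2.1
      have hjun : ∀ x ∈ l₁.getLast?, Cmp par x v := by
        intro x hx
        exact (List.isChain_append.mp hc).2.2 x hx v rfl
      -- nodup facts
      have hnd1 : l₁.Nodup := ((List.nodup_append.mp hnd)).1
      have hnd2 : l₂.Nodup := (List.nodup_cons.mp (List.nodup_append.mp hnd).2.1).2
      have hvnot1 : v ∉ l₁ := fun h => by
        have := (List.nodup_append'.mp hnd).2.2
        exact this h (by simp)
      have hvnot2 : v ∉ l₂ := (List.nodup_cons.mp (List.nodup_append.mp hnd).2.1).1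
      -- all of l₂ are descendants of v
      have hdesc2 : ∀ u ∈ l₂, Anc par v u := by
        intro u hu
        refine forward_anc hpd (v :: l₂) hc2 ?_ (by simp [Anc]; exact ⟨0, rfl⟩) u
          (List.mem_cons_of_mem _ hu)
        intro u hu
        refine hvmin u ?_
        rcases List.mem_cons.mp hu with rfl | h
        · exact hvl
        · exact List.mem_append.mpr (Or.inr (List.mem_cons_of_mem _ h))
      -- all of l₁ are descendants of v (via reversal)
      have hdesc1 : ∀ u ∈ l₁, Anc par v u := by
        intro u hu
        have hcr : (v :: l₁.reverse).Chain' (Cmp par) := by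
          rw [List.Chain', List.isChain_cons]
          constructor
          · intro y hy
            have hy' : y ∈ l₁.getLast? := by
              rwa [← List.head?_reverse]
            exact cmp_symm (hjun y hy')
          · rw [List.isChain_reverse]
            exact hc1.imp (fun a b h => cmp_symm h)
        refine forward_anc hpd (v :: l₁.reverse) hcr ?_ (by simp [Anc]; exact ⟨0, rfl⟩) u
          (List.mem_cons_of_mem _ (by simpa using hu))
        intro u hu
        refine hvmin u ?_
        rcases List.mem_cons.mp hu with rfl | h
        · exact hvl
        · exact List.mem_append.mpr (Or.inl (by simpa using h))
      -- strict depth for l₁ l₂ members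
      have hstrict : ∀ u, u ∈ l₁ ∨ u ∈ l₂ → dep v + 1 ≤ dep u := by
        intro u hu
        have hanc : Anc par v u := by rcases hu with h | h; exacts [hdesc1 u h, hdesc2 u h]
        have hne' : u ≠ v := by
          rintro rfl
          rcases hu with h | h; exacts [hvnot1 h, hvnot2 h]
        exact anc_strict_dep hpd hanc hne'
      have hlen : l₁.length + 1 + l₂.length ≤ N + 1 := by
        have := hl; simp at this; omega
      have h1 := ih l₁ (by omega) hc1 hnd1 (dep v + 1) (fun u hu => hstrict u (Or.inl hu))
      have h2 := ih l₂ (by omega) (hc2.tail) hnd2 (dep v + 1) (fun u hu => hstrict u (Or.inr hu))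
      have hdv : dep v ≤ d := hdep v
      have hmv : m ≤ dep v := hm v hvl
      have hexp : d + 1 - (dep v + 1) + 1 ≤ d + 1 - m := by omega
      have hpow : 2 ^ (d + 1 - (dep v + 1)) * 2 ≤ 2 ^ (d + 1 - m) := by
        calc 2 ^ (d + 1 - (dep v + 1)) * 2 = 2 ^ (d + 1 - (dep v + 1) + 1) := by ring
        _ ≤ 2 ^ (d + 1 - m) := Nat.pow_le_pow_right (by norm_num) hexp
      have : (l₁ ++ v :: l₂).length = l₁.length + l₂.length + 1 := by simp; omega
      omega

lemma td_path_bound {G : SimpleGraph V} {d : ℕ} (htd : treedepthLE G d) :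
    ∀ l : List V, l.Chain' G.Adj → l.Nodup → l.length ≤ 2 ^ d := by
  obtain ⟨par, dep, hpd, hdep, hadj⟩ := htd
  intro l hc hnd
  have hc' : l.Chain' (Cmp par) := hc.imp (fun a b h => by
    rcases hadj a b h with h' | h'
    · exact Or.inl h'
    · exact Or.inr h')
  have hdep1 : ∀ u ∈ l, 1 ≤ dep u := by
    intro u _
    by_cases h : par u = u
    · rw [(hpd u).1 h]
    · rw [(hpd u).2 h]; omega
  have := td_core hpd d hdep l.length l (le_refl _) hc' hnd 1 hdep1
  have h2 : 2 ^ (d + 1 - 1) = 2 ^ d := by norm_num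
  omega

end TDBound
end FIILP

namespace FIILP
open List

variable {t : ℕ}

abbrev NB (H : BGraph t) : Type := {v : H.V // v ∉ Set.range H.b}
abbrev GlueV (G H : BGraph t) : Type := G.V ⊕ NB H

def Run (G H : BGraph t) : Type := List G.V ⊕ NB H
attribute [reducible] Run

def runList {G H : BGraph t} : Run G H → List (GlueV G H)
  | Sum.inl g => g.map Sum.inl
  | Sum.inr v => [Sum.inr v]

def assemble {G H : BGraph t} (rs : List (Run G H)) : List (GlueV G H) :=
  rs.flatMap runList

def gruns {G H : BGraph t} (rs : List (Run G H)) : List (List G.V) :=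
  rs.filterMap (fun r => match r with | Sum.inl g => some g | Sum.inr _ => none)

def vrs {G H : BGraph t} (rs : List (Run G H)) : List (NB H) :=
  rs.filterMap (fun r => match r with | Sum.inl _ => none | Sum.inr v => some v)

@[simp] lemma assemble_nil {G H : BGraph t} : assemble ([] : List (Run G H)) = [] := rfl
@[simp] lemma assemble_cons {G H : BGraph t} (r : Run G H) (rs : List (Run G H)) :
    assemble (r :: rs) = runList r ++ assemble rs := List.flatMap_cons
@[simp] lemma gruns_nil {G H : BGraph t} : gruns ([] : List (Run G H)) = [] := rfl
@[simp] lemma gruns_cons_inl {G H : BGraph t} (g : List G.V) (rs : List (Run G H)) :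
    gruns (Sum.inl g :: rs) = g :: gruns rs := rfl
@[simp] lemma gruns_cons_inr {G H : BGraph t} (v : NB H) (rs : List (Run G H)) :
    gruns (Sum.inr v :: rs) = gruns rs := rfl
@[simp] lemma vrs_nil {G H : BGraph t} : vrs ([] : List (Run G H)) = [] := rfl
@[simp] lemma vrs_cons_inl {G H : BGraph t} (g : List G.V) (rs : List (Run G H)) :
    vrs (Sum.inl g :: rs) = vrs rs := rfl
@[simp] lemma vrs_cons_inr {G H : BGraph t} (v : NB H) (rs : List (Run G H)) :
    vrs (Sum.inr v :: rs) = v :: vrs rs := rfl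

lemma assemble_perm {G H : BGraph t} (rs : List (Run G H)) :
    assemble rs ~ ((gruns rs).flatten).map Sum.inl ++ (vrs rs).map Sum.inr := by
  induction rs with
  | nil => simp
  | cons r rs ih =>
      cases r with
      | inl g =>
          simp only [assemble_cons, gruns_cons_inl, vrs_cons_inl, runList,
            List.flatten_cons, List.map_append, List.append_assoc]
          exact List.Perm.append_left _ ih
      | inr v =>
          simp only [assemble_cons, gruns_cons_inr, vrs_cons_inr, runList,
            List.map_cons, List.singleton_append]
          refine List.Perm.trans (List.Perm.cons _ ih) ?_
          exact List.perm_middle.symm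

open Classical in
noncomputable def labelOf (G : BGraph t) (v : G.V) : Option (Fin t) :=
  if h : ∃ i, G.b i = v then some h.choose else none

lemma labelOf_eq_some {G : BGraph t} {v : G.V} {i : Fin t} :
    labelOf G v = some i ↔ G.b i = v := by
  constructor
  · intro h
    unfold labelOf at h
    split at h
    · rename_i he
      have := he.choose_spec
      cases h
      exact this
    · cases h
  · intro h
    have he : ∃ i, G.b i = v := ⟨i, h⟩
    have hs := he.choose_spec
    have : he.choose = i := G.binj (by rw [hs, ← h])
    simp [labelOf, he, this]

lemma labelOf_eq_none {G : BGraph t} {v : G.V} :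
    labelOf G v = none ↔ ¬∃ i, G.b i = v := by
  unfold labelOf
  split
  · rename_i he; simp [he]
  · rename_i he; simp [he]

noncomputable def entryO {G H : BGraph t} : Run G H → Option H.V
  | Sum.inl g => (g.head?.bind (labelOf G)).map H.b
  | Sum.inr v => some v.1

noncomputable def exitO {G H : BGraph t} : Run G H → Option H.V
  | Sum.inl g => (g.getLast?.bind (labelOf G)).map H.b
  | Sum.inr v => some v.1

def Joins {G H : BGraph t} (r r' : Run G H) : Prop :=
  ∃ a b, exitO r = some a ∧ entryO r' = some b ∧ H.G.Adj a b

def RunsOK (G H : BGraph t) (rs : List (Run G H)) : Prop :=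
  (∀ g ∈ gruns rs, g ≠ [] ∧ g.Chain' G.G.Adj) ∧ rs.Chain' Joins

-- adjacency helpers
lemma glue_adj_iff {G H : BGraph t} (x y : GlueV G H) :
    (glue G H).Adj x y ↔ x ≠ y ∧ (glueAdj G H x y ∨ glueAdj G H y x) :=
  SimpleGraph.fromRel_adj _ _ _

lemma adj_of_pure {G H : BGraph t} {u w : G.V} (h : G.G.Adj u w) :
    (glue G H).Adj (Sum.inl u) (Sum.inl w) := by
  rw [glue_adj_iff]
  exact ⟨by simpa using h.ne, Or.inl (Or.inl h)⟩

lemma adj_of_foreign {G H : BGraph t} {i j : Fin t} (h : H.G.Adj (H.b i) (H.b j)) :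
    (glue G H).Adj (Sum.inl (G.b i)) (Sum.inl (G.b j)) := by
  rw [glue_adj_iff]
  have hij : i ≠ j := fun he => h.ne (by rw [he])
  exact ⟨by simpa using fun he => hij (G.binj he), Or.inl (Or.inr ⟨i, j, rfl, rfl, h⟩)⟩

lemma adj_of_cross {G H : BGraph t} {i : Fin t} {v : NB H} (h : H.G.Adj (H.b i) v.1) :
    (glue G H).Adj (Sum.inl (G.b i)) (Sum.inr v) := by
  rw [glue_adj_iff]
  exact ⟨by simp, Or.inl ⟨i, rfl, h⟩⟩

lemma adj_of_inr {G H : BGraph t} {v w : NB H} (h : H.G.Adj v.1 w.1) :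
    (glue G H).Adj (Sum.inr v) (Sum.inr w) := by
  rw [glue_adj_iff]
  refine ⟨?_, Or.inl h⟩
  intro he
  exact h.ne (by cases he; rfl)

lemma adj_inl_inl {G H : BGraph t} {u w : G.V}
    (h : (glue G H).Adj (Sum.inl u) (Sum.inl w)) :
    G.G.Adj u w ∨ ∃ i j, u = G.b i ∧ w = G.b j ∧ H.G.Adj (H.b i) (H.b j) := by
  rw [glue_adj_iff] at h
  rcases h.2 with (h' | h') | (h' | h')
  · exact Or.inl h'
  · exact Or.inr h'
  · exact Or.inl h'.symm
  · obtain ⟨i, j, h1, h2, h3⟩ := h'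
    exact Or.inr ⟨j, i, h2, h1, h3.symm⟩

lemma adj_inl_inr {G H : BGraph t} {u : G.V} {v : NB H}
    (h : (glue G H).Adj (Sum.inl u) (Sum.inr v)) :
    ∃ i, u = G.b i ∧ H.G.Adj (H.b i) v.1 := by
  rw [glue_adj_iff] at h
  rcases h.2 with h' | h'
  · exact h'
  · exact absurd h' (by simp [glueAdj])

lemma adj_inr_inr {G H : BGraph t} {v w : NB H}
    (h : (glue G H).Adj (Sum.inr v) (Sum.inr w)) : H.G.Adj v.1 w.1 := by
  rw [glue_adj_iff] at h
  rcases h.2 with h' | h'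
  · exact h'
  · exact h'.symm

lemma runList_ne_nil {G H : BGraph t} {r : Run G H} (h : ∀ g, r = Sum.inl g → g ≠ []) :
    runList r ≠ [] := by
  cases r with
  | inl g =>
      have := h g rfl
      simp [runList, this]
  | inr v => simp [runList]


lemma runList_chain' {G H : BGraph t} {r : Run G H}
    (h : ∀ g, r = Sum.inl g → g.Chain' G.G.Adj) :
    (runList r).Chain' (glue G H).Adj := by
  cases r with
  | inl g =>
      have hg := h g rfl
      simp only [runList]
      rw [List.Chain', List.isChain_map]
      exact hg.imp (fun a b hab => adj_of_pure hab)
  | inr v => simp [runList, List.Chain']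

lemma entryO_eq_some {G H : BGraph t} {r : Run G H} {b : H.V} (h : entryO r = some b) :
    ∀ y ∈ (runList r).head?, (∃ i, y = Sum.inl (G.b i) ∧ b = H.b i) ∨
      (∃ v : NB H, y = Sum.inr v ∧ b = v.1) := by
  intro y hy
  cases r with
  | inl g =>
      simp only [entryO, Option.map_eq_some_iff] at h
      obtain ⟨i, hi, rfl⟩ := h
      simp only [Option.bind_eq_some_iff] at hi
      obtain ⟨u, hu, hl⟩ := hi
      rw [labelOf_eq_some] at hl
      left
      refine ⟨i, ?_, rfl⟩
      simp only [runList, List.head?_map, hu] at hy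
      simp only [Option.mem_def, Option.map_some] at hy
      rw [← (Option.some.inj hy), hl]
  | inr v =>
      simp only [entryO] at h
      cases h
      right
      refine ⟨v, ?_, rfl⟩
      simp only [runList, List.head?_cons, Option.mem_def] at hy
      exact (Option.some.inj hy).symm

lemma exitO_eq_some {G H : BGraph t} {r : Run G H} {a : H.V} (h : exitO r = some a) :
    ∀ x ∈ (runList r).getLast?, (∃ i, x = Sum.inl (G.b i) ∧ a = H.b i) ∨
      (∃ v : NB H, x = Sum.inr v ∧ a = v.1) := by
  intro x hx
  cases r with
  | inl g =>
      simp only [exitO, Option.map_eq_some_iff] at h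
      obtain ⟨i, hi, rfl⟩ := h
      simp only [Option.bind_eq_some_iff] at hi
      obtain ⟨u, hu, hl⟩ := hi
      rw [labelOf_eq_some] at hl
      left
      refine ⟨i, ?_, rfl⟩
      simp only [runList, List.getLast?_map, hu] at hx
      simp only [Option.mem_def, Option.map_some] at hx
      rw [← (Option.some.inj hx), hl]
  | inr v =>
      simp only [exitO] at h
      cases h
      right
      refine ⟨v, ?_, rfl⟩
      simp only [runList, List.getLast?_singleton, Option.mem_def] at hx
      exact (Option.some.inj hx).symm

lemma joins_adj {G H : BGraph t} {r r' : Run G H} (hj : Joins r r')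
    {x y : GlueV G H} (hx : x ∈ (runList r).getLast?) (hy : y ∈ (runList r').head?) :
    (glue G H).Adj x y := by
  obtain ⟨a, b, ha, hb, hadj⟩ := hj
  rcases exitO_eq_some ha x hx with ⟨i, rfl, rfl⟩ | ⟨v, rfl, rfl⟩ <;>
    rcases entryO_eq_some hb y hy with ⟨j, rfl, rfl⟩ | ⟨w, rfl, rfl⟩
  · exact adj_of_foreign hadj
  · exact adj_of_cross hadj
  · exact (adj_of_cross hadj.symm).symm
  · exact adj_of_inr hadj

lemma assemble_chain' {G H : BGraph t} (rs : List (Run G H)) (hok : RunsOK G H rs) :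
    (assemble rs).Chain' (glue G H).Adj := by
  obtain ⟨hg, hj⟩ := hok
  induction rs with
  | nil => simp [List.Chain']
  | cons r rs ih =>
      rw [assemble_cons, List.Chain', List.isChain_append]
      have hgr : ∀ g ∈ gruns rs, g ≠ [] ∧ g.Chain' G.G.Adj := by
        intro g hgmem
        refine hg g ?_
        cases r with
        | inl g' => simp [hgmem]
        | inr v => simpa using hgmem
      refine ⟨?_, ih hgr hj.tail, ?_⟩
      · refine runList_chain' (fun g hgeq => ?_)
        subst hgeq
        exact (hg g (by simp)).2
      · intro x hx y hy
        cases rs with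
        | nil => simp at hy
        | cons r' rs' =>
            have hj' : Joins r r' := (List.isChain_cons_cons.mp hj).1
            rw [assemble_cons, List.head?_append] at hy
            have hne : (runList r').head? ≠ none := by
              simp only [ne_eq, List.head?_eq_none_iff]
              refine runList_ne_nil (fun g hgeq => ?_)
              subst hgeq
              exact (hgr g (by simp)).1
            rcases ho : (runList r').head? with _ | y'
            · exact absurd ho hne
            · rw [ho] at hy
              simp only [Option.or_some, Option.mem_def] at hy
              cases hy
              exact joins_adj hj' hx ho
lemma exists_head_run {G H : BGraph t} {rs : List (Run G H)} {y : GlueV G H}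
    {l : List (GlueV G H)}
    (hasm : assemble rs = y :: l) (hg : ∀ g ∈ gruns rs, g ≠ [] ∧ g.Chain' G.G.Adj) :
    ∃ r₀ rs₂, rs = r₀ :: rs₂ ∧ (runList r₀).head? = some y := by
  cases rs with
  | nil => simp at hasm
  | cons r₀ rs₂ =>
      refine ⟨r₀, rs₂, rfl, ?_⟩
      rw [assemble_cons] at hasm
      have hne : runList r₀ ≠ [] :=
        runList_ne_nil (fun g hgeq => by subst hgeq; exact (hg g (by simp)).1)
      cases hr : runList r₀ with
      | nil => exact absurd hr hne
      | cons a as =>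
          rw [hr] at hasm
          simp only [List.cons_append, List.cons.injEq] at hasm
          simp [hasm.1]

lemma exitO_cons {G H : BGraph t} {u : G.V} {g : List G.V} (hne : g ≠ []) :
    exitO (G := G) (H := H) (Sum.inl (u :: g)) = exitO (Sum.inl g) := by
  cases g with
  | nil => exact absurd rfl hne
  | cons a g' => simp [exitO, List.getLast?_cons_cons]

lemma head_shape {G H : BGraph t} {g : List G.V} {y : GlueV G H}
    (h : (runList (G := G) (H := H) (Sum.inl g)).head? = some y) :
    ∃ w, g.head? = some w ∧ y = Sum.inl w := by
  simp only [runList, List.head?_map] at h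
  cases hgh : g.head? with
  | none => rw [hgh] at h; simp at h
  | some w => rw [hgh] at h; exact ⟨w, rfl, (Option.some.inj h).symm⟩

lemma decompose {G H : BGraph t} :
    ∀ l : List (GlueV G H), l.Chain' (glue G H).Adj →
      ∃ rs : List (Run G H), assemble rs = l ∧ RunsOK G H rs := by
  intro l
  induction l with
  | nil => exact fun _ => ⟨[], rfl, ⟨by simp, by simp [List.Chain']⟩⟩
  | cons x l ih =>
      intro hc
      rw [List.Chain', List.isChain_cons] at hc
      obtain ⟨hhead, htail⟩ := hc
      obtain ⟨rs, hasm, hgok, hjok⟩ := ih htail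
      cases l with
      | nil =>
          cases x with
          | inl u =>
              refine ⟨[Sum.inl [u]], by simp [runList], ⟨?_, by simp [List.Chain']⟩⟩
              intro g hg
              simp only [gruns_cons_inl, gruns_nil, List.mem_singleton] at hg
              subst hg
              exact ⟨by simp, by simp [List.Chain']⟩
          | inr v => exact ⟨[Sum.inr v], by simp [runList], ⟨by simp, by simp [List.Chain']⟩⟩
      | cons y l'' =>
          obtain ⟨r₀, rs₂, rfl, hhead₀⟩ := exists_head_run hasm hgok
          have hxy : (glue G H).Adj x y := hhead y rfl
          cases x with
          | inr v =>
              have hjoin : Joins (Sum.inr v) r₀ := by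
                cases r₀ with
                | inl g =>
                    obtain ⟨w, hw, rfl⟩ := head_shape hhead₀
                    obtain ⟨i, rfl, hadj⟩ := adj_inl_inr hxy.symm
                    exact ⟨v.1, H.b i, rfl,
                      by simp [entryO, hw, labelOf_eq_some.mpr rfl], hadj.symm⟩
                | inr w =>
                    have hy : y = Sum.inr w := by
                      simp only [runList, List.head?_cons] at hhead₀
                      exact (Option.some.inj hhead₀).symm
                    subst hy
                    exact ⟨v.1, w.1, rfl, rfl, adj_inr_inr hxy⟩
              refine ⟨Sum.inr v :: r₀ :: rs₂, by simp [runList, hasm], ⟨?_, ?_⟩⟩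
              · intro g hg
                exact hgok g (by simpa using hg)
              · exact List.isChain_cons_cons.mpr ⟨hjoin, hjok⟩
          | inl u =>
              cases r₀ with
              | inr w =>
                  have hy : y = Sum.inr w := by
                    simp only [runList, List.head?_cons] at hhead₀
                    exact (Option.some.inj hhead₀).symm
                  subst hy
                  obtain ⟨i, rfl, hadj⟩ := adj_inl_inr hxy
                  refine ⟨Sum.inl [G.b i] :: Sum.inr w :: rs₂,
                    by simp [runList, hasm], ⟨?_, ?_⟩⟩
                  · intro g hg
                    simp only [gruns_cons_inl, gruns_cons_inr] at hg
                    rcases List.mem_cons.mp hg with rfl | hg'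
                    · exact ⟨by simp, by simp [List.Chain']⟩
                    · exact hgok g (by simpa using hg')
                  · refine List.isChain_cons_cons.mpr ⟨?_, hjok⟩
                    exact ⟨H.b i, w.1, by simp [exitO, labelOf_eq_some.mpr rfl], rfl, hadj⟩
              | inl g =>
                  obtain ⟨w, hw, rfl⟩ := head_shape hhead₀
                  have hgne : g ≠ [] := (hgok g (by simp)).1
                  have hgch : g.Chain' G.G.Adj := (hgok g (by simp)).2
                  by_cases hpure : G.G.Adj u w
                  · -- merge into the first run
                    refine ⟨Sum.inl (u :: g) :: rs₂, ?_, ⟨?_, ?_⟩⟩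
                    · simp only [assemble_cons, runList, List.map_cons] at hasm ⊢
                      rw [← hasm]
                      simp
                    · intro g' hg'
                      rcases List.mem_cons.mp (by simpa using hg') with rfl | hg''
                      · refine ⟨by simp, ?_⟩
                        rw [List.Chain', List.isChain_cons]
                        exact ⟨fun z hz => by rw [hw] at hz; cases hz; exact hpure, hgch⟩
                      · exact hgok g' (by simp [hg''])
                    · rw [List.Chain', List.isChain_cons]
                      refine ⟨?_, (List.isChain_cons.mp hjok).2⟩
                      intro r hr
                      have hjr : Joins (Sum.inl g) r := (List.isChain_cons.mp hjok).1 r hr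
                      rwa [Joins, exitO_cons hgne]
                  · -- a foreign edge: start a new singleton run
                    rcases adj_inl_inl hxy with hpure' | ⟨i, j, rfl, rfl, hadj⟩
                    · exact absurd hpure' hpure
                    · refine ⟨Sum.inl [G.b i] :: Sum.inl g :: rs₂,
                        by simp [runList, hasm], ⟨?_, ?_⟩⟩
                      · intro g' hg'
                        simp only [gruns_cons_inl] at hg'
                        rcases List.mem_cons.mp hg' with rfl | hg''
                        · exact ⟨by simp, by simp [List.Chain']⟩
                        · exact hgok g' (by simpa using hg'')
                      · refine List.isChain_cons_cons.mpr ⟨?_, hjok⟩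
                        exact ⟨H.b i, H.b j, by simp [exitO, labelOf_eq_some.mpr rfl],
                          by simp [entryO, hw, labelOf_eq_some.mpr rfl], hadj⟩

/-! ### Descriptors, realizations, signatures -/

abbrev GDesc (t : ℕ) := Option (Fin t) × Option (Fin t)

def mOpt (G : BGraph t) : Option (Fin t) → G.V → Prop
  | some i, v => v = G.b i
  | none, v => ¬∃ i, G.b i = v

lemma mOpt_labelOf (G : BGraph t) (x : G.V) : mOpt G (labelOf G x) x := by
  cases hl : labelOf G x with
  | none => exact labelOf_eq_none.mp hl
  | some i => exact (labelOf_eq_some.mp hl).symm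

lemma labelOf_of_mOpt {G : BGraph t} {o : Option (Fin t)} {x : G.V} (h : mOpt G o x) :
    labelOf G x = o := by
  cases o with
  | none => exact labelOf_eq_none.mpr h
  | some i => exact labelOf_eq_some.mpr h.symm

noncomputable def gdesc (G : BGraph t) (g : List G.V) : GDesc t :=
  (g.head?.bind (labelOf G), g.getLast?.bind (labelOf G))

def Matches (G : BGraph t) (g : List G.V) (dd : GDesc t) : Prop :=
  g ≠ [] ∧ g.Chain' G.G.Adj ∧ (∀ x ∈ g.head?, mOpt G dd.1 x) ∧
    (∀ x ∈ g.getLast?, mOpt G dd.2 x)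

def Realizes (G : BGraph t) (sys : List (List G.V)) (ds : List (GDesc t)) : Prop :=
  List.Forall₂ (Matches G) sys ds ∧ sys.flatten.Nodup

def sig (G : BGraph t) (ds : List (GDesc t)) : Set ℕ :=
  {n | ∃ sys, Realizes G sys ds ∧ sys.flatten.length = n}

lemma matches_gdesc {G : BGraph t} {g : List G.V} (hne : g ≠ []) (hch : g.Chain' G.G.Adj) :
    Matches G g (gdesc G g) := by
  refine ⟨hne, hch, ?_, ?_⟩
  · intro x hx
    simp only [gdesc, Option.mem_def] at hx ⊢
    rw [hx]
    exact mOpt_labelOf G x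
  · intro x hx
    simp only [gdesc, Option.mem_def] at hx ⊢
    rw [hx]
    exact mOpt_labelOf G x

lemma realizes_self {G H : BGraph t} {rs : List (Run G H)}
    (hg : ∀ g ∈ gruns rs, g ≠ [] ∧ g.Chain' G.G.Adj)
    (hnd : ((gruns rs).flatten).Nodup) :
    Realizes G (gruns rs) ((gruns rs).map (gdesc G)) := by
  refine ⟨?_, hnd⟩
  rw [List.forall₂_map_right_iff]
  have : ∀ L : List (List G.V), (∀ g ∈ L, g ≠ [] ∧ g.Chain' G.G.Adj) →
      List.Forall₂ (fun g g' => Matches G g (gdesc G g')) L L := by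
    intro L
    induction L with
    | nil => exact fun _ => List.Forall₂.nil
    | cons g L ih =>
        intro hL
        refine List.Forall₂.cons ?_ (ih (fun g' h => hL g' (List.mem_cons_of_mem _ h)))
        exact matches_gdesc (hL g (by simp)).1 (hL g (by simp)).2
  exact this _ hg

/-! ### Rebuilding -/

def rebuild {G₁ G₂ H : BGraph t} : List (Run G₁ H) → List (List G₂.V) → List (Run G₂ H)
  | [], _ => []
  | Sum.inl _ :: rs, g' :: sys' => Sum.inl g' :: rebuild rs sys'
  | Sum.inl _ :: _, [] => []
  | Sum.inr v :: rs, sys' => Sum.inr v :: rebuild rs sys'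

lemma gruns_rebuild {G₁ G₂ H : BGraph t} :
    ∀ (rs : List (Run G₁ H)) (sys' : List (List G₂.V)),
      sys'.length = (gruns rs).length → gruns (rebuild (G₁ := G₁) rs sys') = sys' := by
  intro rs
  induction rs with
  | nil =>
      intro sys' h
      simp only [gruns_nil, List.length_nil, List.length_eq_zero_iff] at h
      simp [h, rebuild]
  | cons r rs ih =>
      intro sys' h
      cases r with
      | inl g =>
          cases sys' with
          | nil => simp at h
          | cons g' sys₂ =>
              simp only [rebuild, gruns_cons_inl]
              rw [ih sys₂ (by simpa using h)]
      | inr v =>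
          simp only [rebuild, gruns_cons_inr]
          exact ih sys' (by simpa using h)

lemma vrs_rebuild {G₁ G₂ H : BGraph t} :
    ∀ (rs : List (Run G₁ H)) (sys' : List (List G₂.V)),
      sys'.length = (gruns rs).length → vrs (rebuild (G₁ := G₁) rs sys') = vrs rs := by
  intro rs
  induction rs with
  | nil => intro sys' h; simp [rebuild]
  | cons r rs ih =>
      intro sys' h
      cases r with
      | inl g =>
          cases sys' with
          | nil => simp at h
          | cons g' sys₂ =>
              simp only [rebuild, vrs_cons_inl]
              exact ih sys₂ (by simpa using h)
      | inr v =>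
          simp only [rebuild, vrs_cons_inr]
          rw [ih sys' (by simpa using h)]

lemma entryO_of_matches {G₁ G₂ H : BGraph t} {g : List G₁.V} {g' : List G₂.V}
    (hm : Matches G₂ g' (gdesc G₁ g)) :
    entryO (G := G₂) (H := H) (Sum.inl g') = entryO (G := G₁) (H := H) (Sum.inl g) := by
  obtain ⟨hne, _, hh, _⟩ := hm
  cases hh' : g'.head? with
  | none => exact absurd (List.head?_eq_none_iff.mp hh') hne
  | some x =>
      have hx := hh x hh'
      have hlx : labelOf G₂ x = (gdesc G₁ g).1 := labelOf_of_mOpt hx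
      simp only [entryO, hh', Option.bind_some, hlx, gdesc]

lemma exitO_of_matches {G₁ G₂ H : BGraph t} {g : List G₁.V} {g' : List G₂.V}
    (hm : Matches G₂ g' (gdesc G₁ g)) :
    exitO (G := G₂) (H := H) (Sum.inl g') = exitO (G := G₁) (H := H) (Sum.inl g) := by
  obtain ⟨hne, _, _, hh⟩ := hm
  cases hh' : g'.getLast? with
  | none => exact absurd (List.getLast?_eq_none_iff.mp hh') hne
  | some x =>
      have hx := hh x hh'
      have hlx : labelOf G₂ x = (gdesc G₁ g).2 := labelOf_of_mOpt hx
      simp only [exitO, hh', Option.bind_some, hlx, gdesc]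

/-- pointwise interface preservation -/
def IfaceEq {G₁ G₂ H : BGraph t} (r : Run G₁ H) (r' : Run G₂ H) : Prop :=
  entryO r = entryO r' ∧ exitO r = exitO r'

lemma forall₂_iface_rebuild {G₁ G₂ H : BGraph t} :
    ∀ (rs : List (Run G₁ H)) (sys' : List (List G₂.V)),
      List.Forall₂ (Matches G₂) sys' ((gruns rs).map (gdesc G₁)) →
      List.Forall₂ (IfaceEq (H := H)) rs (rebuild rs sys') := by
  intro rs
  induction rs with
  | nil => intro sys' h; simp only [gruns_nil, List.map_nil] at h
           cases h
           exact List.Forall₂.nil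
  | cons r rs ih =>
      intro sys' h
      cases r with
      | inl g =>
          simp only [gruns_cons_inl, List.map_cons] at h
          cases h with
          | cons hm hrest =>
              rename_i g' sys₂
              refine List.Forall₂.cons ?_ (ih sys₂ hrest)
              exact ⟨(entryO_of_matches hm).symm, (exitO_of_matches hm).symm⟩
      | inr v =>
          simp only [gruns_cons_inr] at h
          exact List.Forall₂.cons ⟨rfl, rfl⟩ (ih sys' h)

lemma chain'_joins_of_iface {G₁ G₂ H : BGraph t} :
    ∀ {rs : List (Run G₁ H)} {rs' : List (Run G₂ H)},
      List.Forall₂ (IfaceEq (H := H)) rs rs' → rs.Chain' Joins → rs'.Chain' Joins := by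
  intro rs rs' hf
  induction hf with
  | nil => simp [List.Chain']
  | cons hab hrest ih =>
      rename_i a b l₁ l₂
      intro hc
      rw [List.Chain', List.isChain_cons] at hc ⊢
      refine ⟨?_, ih hc.2⟩
      intro y' hy'
      cases hrest with
      | nil => simp at hy'
      | cons hcd hrest₂ =>
          rename_i c d l₃ l₄
          simp only [List.head?_cons, Option.mem_def] at hy'
          cases hy'
          have hj : Joins a c := hc.1 c (by simp)
          obtain ⟨x, y, hx, hy, hadj⟩ := hj
          exact ⟨x, y, by rw [← hab.2, hx], by rw [← hcd.1, hy], hadj⟩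

lemma nodup_assemble_iff {G H : BGraph t} (rs : List (Run G H)) :
    (assemble rs).Nodup ↔ ((gruns rs).flatten).Nodup ∧ (vrs rs).Nodup := by
  rw [(assemble_perm rs).nodup_iff]
  rw [List.nodup_append']
  constructor
  · rintro ⟨h1, h2, _⟩
    exact ⟨h1.of_map _, h2.of_map _⟩
  · rintro ⟨h1, h2⟩
    refine ⟨h1.map (fun a b => by simp), h2.map (fun a b => by simp), ?_⟩
    intro a ha hb
    simp only [List.mem_map] at ha hb
    obtain ⟨x, _, rfl⟩ := ha
    obtain ⟨y, _, hy⟩ := hb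
    simp at hy

lemma length_assemble {G H : BGraph t} (rs : List (Run G H)) :
    (assemble rs).length = ((gruns rs).flatten).length + (vrs rs).length := by
  rw [(assemble_perm rs).length_eq]
  simp [Function.comp_def]

/-! ### Counting: at most `t+1` G-runs -/

lemma length_filterMap_of_isSome {α β : Type*} (f : α → Option β) :
    ∀ l : List α, (∀ a ∈ l, (f a).isSome) → (l.filterMap f).length = l.length := by
  intro l
  induction l with
  | nil => simp
  | cons a l ih =>
      intro h
      obtain ⟨b, hb⟩ := Option.isSome_iff_exists.mp (h a (by simp))
      rw [List.filterMap_cons, hb]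
      simp only [List.length_cons]
      rw [ih (fun a ha => h a (List.mem_cons_of_mem _ ha))]

lemma chain'_exists_pred {α : Type*} {R : α → α → Prop} :
    ∀ l : List α, l.Chain' R → ∀ x ∈ l.tail, ∃ y, R y x := by
  intro l
  induction l with
  | nil => simp
  | cons a l ih =>
      intro hc x hx
      simp only [List.tail_cons] at hx
      cases l with
      | nil => simp at hx
      | cons b l' =>
          rcases List.mem_cons.mp hx with rfl | hx'
          · exact ⟨a, (List.isChain_cons_cons.mp hc).1⟩
          · exact ih (List.isChain_cons_cons.mp hc).2 x hx'

lemma heads_facts {α : Type*} :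
    ∀ L : List (List α), L.flatten.Nodup → (∀ g ∈ L, g ≠ []) →
      (L.filterMap List.head?).Nodup ∧ ∀ x ∈ L.filterMap List.head?, x ∈ L.flatten := by
  intro L
  induction L with
  | nil => simp
  | cons g L ih =>
      intro hnd hne
      rw [List.flatten_cons, List.nodup_append'] at hnd
      obtain ⟨hg, hL, hdisj⟩ := hnd
      obtain ⟨ih1, ih2⟩ := ih hL (fun g' h => hne g' (List.mem_cons_of_mem _ h))
      cases hh : g.head? with
      | none => exact absurd (List.head?_eq_none_iff.mp hh) (hne g (by simp))
      | some a =>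
          have hag : a ∈ g := List.mem_of_mem_head? (by rw [hh]; rfl)
          rw [List.filterMap_cons, hh]
          constructor
          · rw [List.nodup_cons]
            refine ⟨fun hmem => ?_, ih1⟩
            exact hdisj hag (ih2 a hmem)
          · intro x hx
            rw [List.flatten_cons, List.mem_append]
            rcases List.mem_cons.mp hx with rfl | hx'
            · exact Or.inl hag
            · exact Or.inr (ih2 x hx')

lemma mem_gruns {G H : BGraph t} {rs : List (Run G H)} {g : List G.V} :
    g ∈ gruns rs ↔ Sum.inl g ∈ rs := by
  simp only [gruns, List.mem_filterMap]
  constructor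
  · rintro ⟨r, hr, hfr⟩
    cases r with
    | inl g' => simp only at hfr; cases hfr; exact hr
    | inr v => simp at hfr
  · intro h
    exact ⟨Sum.inl g, h, rfl⟩

lemma gruns_tail_flatten_nodup {G H : BGraph t} (rs : List (Run G H))
    (hnd : ((gruns rs).flatten).Nodup) : ((gruns rs.tail).flatten).Nodup := by
  cases rs with
  | nil => simp
  | cons r rs' =>
      cases r with
      | inl g =>
          rw [gruns_cons_inl, List.flatten_cons, List.nodup_append] at hnd
          exact hnd.2.1
      | inr v => exact hnd

lemma gruns_length_le {G H : BGraph t} (rs : List (Run G H)) (hok : RunsOK G H rs)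
    (hnd : ((gruns rs).flatten).Nodup) : (gruns rs).length ≤ t + 1 := by
  obtain ⟨hg, hj⟩ := hok
  cases rs with
  | nil => simp
  | cons r rs' =>
      -- the G-runs among `rs'` all have boundary entry vertices, pairwise distinct
      set L := gruns rs' with hL
      have hLsub : ∀ g ∈ L, g ∈ gruns (r :: rs') := by
        intro g hgmem
        cases r with
        | inl g' => exact List.mem_cons_of_mem _ hgmem
        | inr v => exact hgmem
      have hLnd : L.flatten.Nodup := gruns_tail_flatten_nodup (r :: rs') hnd
      have hLne : ∀ g ∈ L, g ≠ [] := fun g h => (hg g (hLsub g h)).1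
      obtain ⟨hhnd, hhmem⟩ := heads_facts L hLnd hLne
      set hd := L.filterMap List.head? with hhd
      have hhdlen : hd.length = L.length := length_filterMap_of_isSome _ L (by
        intro g hgmem
        cases hh : g.head? with
        | none => exact absurd (List.head?_eq_none_iff.mp hh) (hLne g hgmem)
        | some a => simp)
      -- every head of an `rs'` G-run is a boundary vertex
      have hbdry : ∀ v ∈ hd, (labelOf G v).isSome := by
        intro v hv
        rw [hhd, List.mem_filterMap] at hv
        obtain ⟨g, hgmem, hgh⟩ := hv
        have hrtl : Sum.inl g ∈ (r :: rs').tail := by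
          rw [List.tail_cons]
          exact mem_gruns.mp hgmem
        obtain ⟨r₀, hjr⟩ := chain'_exists_pred (r :: rs') hj _ hrtl
        obtain ⟨a, b, _, hb, _⟩ := hjr
        simp only [entryO, hgh, Option.bind_some, Option.map_eq_some_iff] at hb
        obtain ⟨i, hi, _⟩ := hb
        simp [hi]
      have hlab : (hd.filterMap (labelOf G)).Nodup := by
        refine List.Nodup.filterMap ?_ hhnd
        intro a a' b hb hb'
        have h1 := labelOf_eq_some.mp hb
        have h2 := labelOf_eq_some.mp hb'
        rw [← h1, ← h2]
      have hlablen : (hd.filterMap (labelOf G)).length = hd.length :=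
        length_filterMap_of_isSome _ hd hbdry
      have hcard : (hd.filterMap (labelOf G)).length ≤ t := by
        have := hlab.length_le_card
        simpa using this
      have hLlen : L.length ≤ t := by omega
      cases r with
      | inl g => simp only [gruns_cons_inl, List.length_cons, ← hL]; omega
      | inr v => simp only [gruns_cons_inr, ← hL]; omega

/-! ### the exchange argument -/

lemma forall₂_mem_left {α β : Type*} {R : α → β → Prop} :
    ∀ {l : List α} {l' : List β}, List.Forall₂ R l l' → ∀ a ∈ l, ∃ b, R a b := by
  intro l l' h
  induction h with
  | nil => simp
  | cons hab hrest ih =>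
      intro a ha
      rcases List.mem_cons.mp ha with rfl | ha'
      · exact ⟨_, hab⟩
      · exact ih a ha'

lemma exchange {G₁ G₂ H : BGraph t}
    (hsig : ∀ ds : List (GDesc t), ds.length ≤ t + 1 → sig G₁ ds = sig G₂ ds)
    (l : List (GlueV G₁ H)) (hc : l.Chain' (glue G₁ H).Adj) (hnd : l.Nodup) :
    ∃ l' : List (GlueV G₂ H), l'.Chain' (glue G₂ H).Adj ∧ l'.Nodup ∧
      l'.length = l.length := by
  obtain ⟨rs, rfl, hok⟩ := decompose l hc
  have hnda := (nodup_assemble_iff rs).mp hnd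
  set ds := (gruns rs).map (gdesc G₁) with hds
  have hlends : ds.length ≤ t + 1 := by
    rw [hds, List.length_map]
    exact gruns_length_le rs hok hnda.1
  have hmem : ((gruns rs).flatten).length ∈ sig G₁ ds :=
    ⟨gruns rs, realizes_self hok.1 hnda.1, rfl⟩
  rw [hsig ds hlends] at hmem
  obtain ⟨sys', ⟨hf, hndf⟩, hlen⟩ := hmem
  have hlen' : sys'.length = (gruns rs).length := by
    have := hf.length_eq
    rwa [hds, List.length_map] at this
  refine ⟨assemble (rebuild rs sys'), ?_, ?_, ?_⟩
  · apply assemble_chain'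
    constructor
    · intro g hg
      rw [gruns_rebuild rs sys' hlen'] at hg
      obtain ⟨dd, hm⟩ := forall₂_mem_left hf g hg
      exact ⟨hm.1, hm.2.1⟩
    · exact chain'_joins_of_iface (forall₂_iface_rebuild rs sys' (by rwa [← hds])) hok.2
  · rw [nodup_assemble_iff, gruns_rebuild rs sys' hlen', vrs_rebuild rs sys' hlen']
    exact ⟨hndf, hnda.2⟩
  · rw [length_assemble, gruns_rebuild rs sys' hlen', vrs_rebuild rs sys' hlen',
      length_assemble, hlen]

/-! ### from walks to lists and back -/

lemma exists_walk_of_chain' {W : Type*} {Gr : SimpleGraph W} :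
    ∀ l : List W, l ≠ [] → l.Chain' Gr.Adj → ∃ u v, ∃ p : Gr.Walk u v, p.support = l := by
  intro l
  induction l with
  | nil => simp
  | cons x l ih =>
      intro _ hc
      cases l with
      | nil => exact ⟨x, x, SimpleGraph.Walk.nil, rfl⟩
      | cons y l' =>
          obtain ⟨u, v, p, hsup⟩ := ih (by simp) (List.isChain_cons_cons.mp hc).2
          have hu : u = y := by
            have h2 := p.support_eq_cons
            rw [hsup] at h2
            exact ((List.cons.injEq _ _ _ _ ▸ h2).1).symm
          subst hu
          exact ⟨x, v, SimpleGraph.Walk.cons (List.isChain_cons_cons.mp hc).1 p, by simp [hsup]⟩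

lemma hasPathGE_transfer {G₁ G₂ H : BGraph t}
    (hsig : ∀ ds : List (GDesc t), ds.length ≤ t + 1 → sig G₁ ds = sig G₂ ds)
    (ℓ : ℤ) (h : HasPathGE (glue G₁ H) ℓ) : HasPathGE (glue G₂ H) ℓ := by
  obtain ⟨u, v, p, hp, hl⟩ := h
  obtain ⟨l', hc', hnd', hlen'⟩ := exchange hsig p.support p.isChain_adj_support
    ((SimpleGraph.Walk.isPath_def p).mp hp)
  have hne' : l' ≠ [] := by
    intro he
    rw [he] at hlen'
    simp only [List.length_nil] at hlen'
    rw [p.length_support] at hlen'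
    omega
  obtain ⟨u', v', p', hsup'⟩ := exists_walk_of_chain' l' hne' hc'
  refine ⟨u', v', p', ?_, ?_⟩
  · rw [SimpleGraph.Walk.isPath_def, hsup']
    exact hnd'
  · have h1 : p'.length + 1 = p.length + 1 := by
      rw [← p.length_support, ← p'.length_support, hsup', hlen']
    omega

/-! ### Boundedness of signatures under treedepth -/

lemma sig_lt {G : BGraph t} {d : ℕ} (htd : treedepthLE G.G d) {ds : List (GDesc t)}
    (hds : ds.length ≤ t + 1) {n : ℕ} (hn : n ∈ sig G ds) : n < (t + 1) * 2 ^ d + 1 := by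
  obtain ⟨sys, ⟨hf, hnd⟩, rfl⟩ := hn
  have hbound : ∀ x ∈ sys.map List.length, x ≤ 2 ^ d := by
    intro x hx
    rw [List.mem_map] at hx
    obtain ⟨g, hgmem, rfl⟩ := hx
    obtain ⟨dd, hm⟩ := forall₂_mem_left hf g hgmem
    have hgnd : g.Nodup := (List.sublist_flatten_of_mem hgmem).nodup hnd
    exact td_path_bound htd g hm.2.1 hgnd
  have hsum := List.sum_le_card_nsmul (sys.map List.length) (2 ^ d) hbound
  rw [List.length_flatten]
  have hsum' : (sys.map List.length).sum ≤ sys.length * 2 ^ d := by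
    simpa [nsmul_eq_mul] using hsum
  have hlen : sys.length = ds.length := hf.length_eq
  have h3 : sys.length * 2 ^ d ≤ (t + 1) * 2 ^ d :=
    Nat.mul_le_mul_right _ (by omega)
  omega

/-! ### Finitely many signatures -/

open Classical in
noncomputable def sigF (G : BGraph t) (B : ℕ) (ds : List (GDesc t)) : Finset ℕ :=
  (Finset.range B).filter (· ∈ sig G ds)

/-- the encoding domain -/
abbrev SigDom (t : ℕ) : Type := Σ n : Fin (t + 2), Fin n → GDesc t

noncomputable def Phi (d : ℕ) (G : BGraph t) : SigDom t → Finset ℕ :=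
  fun z => sigF G ((t + 1) * 2 ^ d + 1) (List.ofFn z.2)

lemma sig_eq_of_phi_eq {G₁ G₂ : BGraph t} {d : ℕ}
    (h₁ : treedepthLE G₁.G d) (h₂ : treedepthLE G₂.G d)
    (hphi : Phi d G₁ = Phi d G₂) :
    ∀ ds : List (GDesc t), ds.length ≤ t + 1 → sig G₁ ds = sig G₂ ds := by
  intro ds hds
  have hz : ∃ z : SigDom t, List.ofFn z.2 = ds := by
    refine ⟨⟨⟨ds.length, by omega⟩, fun k => ds.get ⟨k.1, k.2⟩⟩, ?_⟩
    exact List.ofFn_get ds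
  obtain ⟨z, hz⟩ := hz
  have hF : sigF G₁ ((t + 1) * 2 ^ d + 1) ds = sigF G₂ ((t + 1) * 2 ^ d + 1) ds := by
    have := congrFun hphi z
    rwa [Phi, Phi, hz] at this
  ext n
  constructor
  · intro hn
    have hn' : n ∈ sigF G₁ ((t + 1) * 2 ^ d + 1) ds := by
      classical
      simp only [sigF, Finset.mem_filter, Finset.mem_range]
      exact ⟨sig_lt h₁ hds hn, hn⟩
    rw [hF] at hn'
    classical
    exact (Finset.mem_filter.mp hn').2
  · intro hn
    have hn' : n ∈ sigF G₂ ((t + 1) * 2 ^ d + 1) ds := by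
      classical
      simp only [sigF, Finset.mem_filter, Finset.mem_range]
      exact ⟨sig_lt h₂ hds hn, hn⟩
    rw [← hF] at hn'
    classical
    exact (Finset.mem_filter.mp hn').2

lemma phi_range_finite (d : ℕ) :
    (Set.range (Phi (t := t) d)).Finite := by
  have hsub : Set.range (Phi (t := t) d) ⊆
      Set.univ.pi (fun _ : SigDom t => {A : Finset ℕ | A ⊆ Finset.range ((t + 1) * 2 ^ d + 1)}) := by
    rintro f ⟨G, rfl⟩
    intro z _
    simp only [Set.mem_setOf_eq, Phi, sigF]
    classical
    intro n hn
    simp only [Finset.mem_filter, Finset.mem_range] at hn ⊢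
    exact hn.1
  refine Set.Finite.subset (Set.Finite.pi ?_) hsub
  intro z
  refine Set.Finite.subset ((Finset.range ((t + 1) * 2 ^ d + 1)).powerset.finite_toSet) ?_
  intro A hA
  exact Finset.mem_coe.mpr (Finset.mem_powerset.mpr hA)

end FIILP


/-- Longest Path has finite integer index on graphs of treedepth at most `d`. -/
theorem longestPath_finite_integer_index (t d : ℕ) :
    ∃ R : Set (BGraph t), R.Finite ∧
      ∀ G : BGraph t, treedepthLE G.G d → ∃ R₀ ∈ R, LPEquiv G R₀ := by
  classical
  set S : Set (BGraph t) := {G | treedepthLE G.G d} with hS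
  set F : Set (FIILP.SigDom t → Finset ℕ) := FIILP.Phi d '' S with hF
  have hFfin : F.Finite := (FIILP.phi_range_finite d).subset (Set.image_subset_range _ _)
  haveI := hFfin.to_subtype
  set pick : F → BGraph t := fun y => y.2.choose with hpick
  have hpickspec : ∀ y : F, pick y ∈ S ∧ FIILP.Phi d (pick y) = y.1 := by
    intro y
    exact ⟨y.2.choose_spec.1, y.2.choose_spec.2⟩
  refine ⟨Set.range pick, Set.finite_range pick, ?_⟩
  intro G htd
  have hmem : FIILP.Phi d G ∈ F := ⟨G, htd, rfl⟩
  set y : F := ⟨FIILP.Phi d G, hmem⟩ with hy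
  refine ⟨pick y, ⟨y, rfl⟩, ?_⟩
  obtain ⟨hR₀S, hR₀phi⟩ := hpickspec y
  have hsig : ∀ ds : List (FIILP.GDesc t), ds.length ≤ t + 1 →
      FIILP.sig G ds = FIILP.sig (pick y) ds :=
    FIILP.sig_eq_of_phi_eq htd hR₀S (by rw [hR₀phi])
  refine ⟨0, fun H ℓ => ?_⟩
  rw [add_zero]
  constructor
  · exact FIILP.hasPathGE_transfer hsig ℓ
  · exact FIILP.hasPathGE_transfer (fun ds hds => (hsig ds hds).symm) ℓ
end

section
/- For all t, d ∈ ℕ, the Exact Cycle problem has finite integer index on graphs of treedepth at most d: there exists a finite set 𝓡 of t-boundaried graphs such that every t-boundaried graph G whose underlying graph has treedepth at most d satisfies G ≡_{EC,t} R for some R ∈ 𝓡. -/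
/-- `G` contains a simple cycle with exactly `ℓ` edges. -/
def HasCycleEQ {W : Type*} (G : SimpleGraph W) (ℓ : ℤ) : Prop :=
  ∃ (u : W) (p : G.Walk u u), p.IsCycle ∧ (p.length : ℤ) = ℓ

/-- Equivalence of `t`-boundaried graphs for the Exact Cycle problem. -/
def ECEquiv {t : ℕ} (G₁ G₂ : BGraph t) : Prop :=
  ∃ Δ : ℤ, ∀ (H : BGraph t) (ℓ : ℤ),
    HasCycleEQ (glue G₁ H) ℓ ↔ HasCycleEQ (glue G₂ H) (ℓ + Δ)

section Runs

variable (n : ℕ) (Q : ℕ → Prop)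

open Classical in
noncomputable def runPrev (j : ℕ) : ℕ :=
  if ∃ m, m < j ∧ Q m then Nat.findGreatest Q (j - 1) else n - 1

open Classical in
noncomputable def runBack (j : ℕ) : ℕ :=
  if ∃ m, m < j ∧ Q m then j - runPrev n Q j - 1 else j

open Classical in
noncomputable def runLen (m : ℕ) : ℕ :=
  if hh : ∃ k, Q (m + 1 + k) then Nat.find hh else 0

def posN (m r : ℕ) : ℕ := (m + 1 + r) % n

variable {n Q}
variable (hmod : ∀ a, Q a ↔ Q (a % n)) (hlast : Q (n - 1)) (hn : 1 ≤ n)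

open Classical

include hmod hlast hn in
lemma runLen_ex (m : ℕ) : ∃ k, Q (m + 1 + k) := by
  refine ⟨n - 1 - (m + 1) % n, ?_⟩
  rw [hmod]
  have h1 : (m + 1) % n < n := Nat.mod_lt _ (by omega)
  have h2 : (m + 1 + (n - 1 - (m + 1) % n)) % n = ((m + 1) % n + (n - 1 - (m + 1) % n)) % n := by
    conv_lhs => rw [Nat.add_mod]
    rw [Nat.mod_eq_of_lt (show n - 1 - (m + 1) % n < n by omega)]
  rw [h2]
  have h3 : (m + 1) % n + (n - 1 - (m + 1) % n) = n - 1 := by omega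
  rw [h3, Nat.mod_eq_of_lt (by omega)]
  exact hlast

include hmod hlast hn in
lemma runLen_spec (m : ℕ) :
    Q (m + 1 + runLen Q m) ∧ ∀ r < runLen Q m, ¬ Q (m + 1 + r) := by
  have hh := runLen_ex hmod hlast hn m
  rw [runLen, dif_pos hh]
  exact ⟨Nat.find_spec hh, fun r hr => Nat.find_min hh hr⟩

include hmod hlast hn in
lemma runLen_le_of_lt {m : ℕ} (hm : m < n - 1) : runLen Q m ≤ n - 2 - m := by
  have hh := runLen_ex hmod hlast hn m
  rw [runLen, dif_pos hh]
  apply Nat.find_min' hh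
  have : m + 1 + (n - 2 - m) = n - 1 := by omega
  rw [this]; exact hlast

include hmod hlast hn in
lemma runLen_last_le : runLen Q (n - 1) ≤ n - 1 := by
  have hh := runLen_ex hmod hlast hn (n - 1)
  rw [runLen, dif_pos hh]
  apply Nat.find_min' hh
  rw [hmod]
  have : n - 1 + 1 + (n - 1) = n + (n - 1) := by omega
  rw [this, Nat.add_mod_left, Nat.mod_eq_of_lt (by omega)]
  exact hlast

include hmod hlast hn in
lemma runKey {m : ℕ} (hm : m < n) (hQm : Q m) {r : ℕ} (hr : r ≤ runLen Q m) :
    runPrev n Q (posN n m r) = m ∧ runBack n Q (posN n m r) = r := by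
  have hspec := runLen_spec hmod hlast hn m
  rcases Nat.lt_or_ge m (n - 1) with hm1 | hm1
  · -- m < n - 1, no wraparound
    have hb : runLen Q m ≤ n - 2 - m := runLen_le_of_lt hmod hlast hn hm1
    have hj : m + 1 + r < n := by omega
    have hpos : posN n m r = m + 1 + r := Nat.mod_eq_of_lt hj
    have hcond : ∃ m', m' < m + 1 + r ∧ Q m' := ⟨m, by omega, hQm⟩
    have hfg : Nat.findGreatest Q (m + 1 + r - 1) = m := by
      have h1 : m ≤ Nat.findGreatest Q (m + 1 + r - 1) :=
        Nat.le_findGreatest (by omega) hQm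
      have h2 : Nat.findGreatest Q (m + 1 + r - 1) ≤ m + 1 + r - 1 := Nat.findGreatest_le _
      by_contra hne
      have h3 : m < Nat.findGreatest Q (m + 1 + r - 1) := by omega
      have h4 : Q (Nat.findGreatest Q (m + 1 + r - 1)) :=
        Nat.findGreatest_spec (m := m) (by omega) hQm
      have h5 : ¬ Q (m + 1 + (Nat.findGreatest Q (m + 1 + r - 1) - m - 1)) :=
        hspec.2 _ (by omega)
      have h6 : m + 1 + (Nat.findGreatest Q (m + 1 + r - 1) - m - 1)
          = Nat.findGreatest Q (m + 1 + r - 1) := by omega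
      rw [h6] at h5; exact h5 h4
    constructor
    · rw [hpos, runPrev, if_pos hcond, hfg]
    · rw [hpos, runBack, if_pos hcond, runPrev, if_pos hcond, hfg]; omega
  · -- m = n - 1
    have hm2 : m = n - 1 := by omega
    subst hm2
    have hb : runLen Q (n - 1) ≤ n - 1 := runLen_last_le hmod hlast hn
    have hpos : posN n (n - 1) r = r := by
      rw [posN]
      have : n - 1 + 1 + r = n + r := by omega
      rw [this, Nat.add_mod_left, Nat.mod_eq_of_lt (by omega)]
    have hnone : ¬ ∃ m', m' < r ∧ Q m' := by
      rintro ⟨m', hm', hQm'⟩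
      have h5 : ¬ Q (n - 1 + 1 + m') := hspec.2 _ (by omega)
      have : (n - 1 + 1 + m') % n = m' := by
        have : n - 1 + 1 + m' = n + m' := by omega
        rw [this, Nat.add_mod_left, Nat.mod_eq_of_lt (by omega)]
      rw [hmod, this] at h5
      exact h5 hQm'
    constructor
    · rw [hpos, runPrev, if_neg hnone]
    · rw [hpos, runBack, if_neg hnone]

include hmod hlast hn in
lemma runSurj {j : ℕ} (hj : j < n) :
    runPrev n Q j < n ∧ Q (runPrev n Q j) ∧ runBack n Q j ≤ runLen Q (runPrev n Q j) ∧
    posN n (runPrev n Q j) (runBack n Q j) = j := by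
  by_cases hcond : ∃ m, m < j ∧ Q m
  · obtain ⟨m₀, hm₀j, hQm₀⟩ := hcond
    have hcond : ∃ m, m < j ∧ Q m := ⟨m₀, hm₀j, hQm₀⟩
    rw [runPrev, if_pos hcond, runBack, if_pos hcond, runPrev, if_pos hcond]
    set fg := Nat.findGreatest Q (j - 1) with hfg
    have h1 : fg ≤ j - 1 := Nat.findGreatest_le _
    have h2 : Q fg := Nat.findGreatest_spec (m := m₀) (by omega) hQm₀
    have h3 : m₀ ≤ fg := Nat.le_findGreatest (by omega) hQm₀
    have hspec := runLen_spec hmod hlast hn fg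
    have h4 : j - fg - 1 ≤ runLen Q fg := by
      by_contra h5
      have h6 : ¬ Q (fg + 1 + runLen Q fg) :=
        Nat.findGreatest_is_greatest (n := j - 1) (k := fg + 1 + runLen Q fg) (by omega) (by omega)
      exact h6 hspec.1
    refine ⟨by omega, h2, h4, ?_⟩
    rw [posN]
    have : fg + 1 + (j - fg - 1) = j := by omega
    rw [this, Nat.mod_eq_of_lt hj]
  · rw [runPrev, if_neg hcond, runBack, if_neg hcond]
    have hall : ∀ m < j, ¬ Q m := by
      intro m hm hQ; exact hcond ⟨m, hm, hQ⟩
    have hspec := runLen_spec hmod hlast hn (n - 1)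
    have h4 : j ≤ runLen Q (n - 1) := by
      by_contra h5
      have h6 : ¬ Q (n - 1 + 1 + runLen Q (n - 1)) := by
        have h7 : (n - 1 + 1 + runLen Q (n - 1)) % n = runLen Q (n - 1) := by
          have : n - 1 + 1 + runLen Q (n - 1) = n + runLen Q (n - 1) := by omega
          rw [this, Nat.add_mod_left, Nat.mod_eq_of_lt (by omega)]
        rw [hmod, h7]
        exact hall _ (by omega)
      exact h6 hspec.1
    refine ⟨by omega, hlast, h4, ?_⟩
    rw [posN]
    have : n - 1 + 1 + j = n + j := by omega
    rw [this, Nat.add_mod_left, Nat.mod_eq_of_lt hj]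

end Runs

section WalkFn

open SimpleGraph

variable {V : Type*} {G : SimpleGraph V}

lemma walk_from_fn (c : ℕ → V) :
    ∀ m : ℕ, (∀ r < m, G.Adj (c r) (c (r+1))) →
    ∃ w : G.Walk (c 0) (c m), w.length = m ∧
      w.support = (List.range (m+1)).map c ∧
      w.edges = (List.range m).map (fun r => s(c r, c (r+1)))
  | 0, _ => ⟨SimpleGraph.Walk.nil, by simp, by simp [List.range_succ], by simp⟩
  | (m+1), h => by
      obtain ⟨w, hl, hs, he⟩ := walk_from_fn c m (fun r hr => h r (by omega))
      refine ⟨w.concat (h m (by omega)), ?_, ?_, ?_⟩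
      · simp [Walk.length_concat, hl]
      · rw [Walk.support_concat, hs, List.range_succ (n := m+1)]
        simp
      · rw [Walk.edges_concat, he, List.range_succ (n := m)]
        simp [hl]

lemma support_eq_map_getVert : ∀ {u v : V} (p : G.Walk u v),
    p.support = (List.range (p.length+1)).map p.getVert
  | _, _, SimpleGraph.Walk.nil => by simp [SimpleGraph.Walk.getVert]
  | u, v, SimpleGraph.Walk.cons h q => by
      rw [Walk.support_cons, Walk.length_cons, List.range_succ_eq_map,
        List.map_cons, List.map_map]
      refine congr_arg₂ List.cons (Walk.getVert_zero _).symm ?_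
      rw [support_eq_map_getVert q]
      apply List.map_congr_left
      intro a _
      simp only [Function.comp_apply]
      exact (Walk.getVert_cons_succ _ _).symm

def CycIdx {W : Type*} (G : SimpleGraph W) (n : ℕ) : Prop :=
  ∃ f : ZMod n → W, Function.Injective f ∧ ∀ i, G.Adj (f i) (f (i + 1))

lemma natCast_zmod_inj {n a b : ℕ} (ha : a < n) (hb : b < n)
    (h : (a : ZMod n) = (b : ZMod n)) : a = b := by
  haveI : NeZero n := ⟨by omega⟩
  have := congrArg ZMod.val h
  rwa [ZMod.val_cast_of_lt ha, ZMod.val_cast_of_lt hb] at this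

lemma cycIdx_of_cycle {n : ℕ} (hn : 3 ≤ n) {u : V} {p : G.Walk u u}
    (hc : p.IsCycle) (hl : p.length = n) : CycIdx G n := by
  haveI : NeZero n := ⟨by omega⟩
  refine ⟨fun i => p.getVert i.val, ?_, ?_⟩
  · -- injectivity
    have hnd : p.support.tail.Nodup := hc.support_nodup
    rw [support_eq_map_getVert, hl, List.range_succ_eq_map] at hnd
    simp only [List.map_cons, List.tail_cons, List.map_map] at hnd
    have hinj : ∀ a < n, ∀ b < n, p.getVert (a+1) = p.getVert (b+1) → a = b := by
      intro a ha b hb hab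
      exact List.inj_on_of_nodup_map hnd (by simp [List.mem_range, ha])
        (by simp [List.mem_range, hb]) (by simpa using hab)
    intro i j hij
    have hvi := ZMod.val_lt i
    have hvj := ZMod.val_lt j
    simp only at hij
    have key : ∀ a < n, ∀ b < n, p.getVert a = p.getVert b → a = b := by
      intro a ha b hb hab
      rcases Nat.eq_zero_or_pos a with rfl | ha0
      · rcases Nat.eq_zero_or_pos b with rfl | hb0
        · rfl
        · exfalso
          have h0 : p.getVert 0 = p.getVert n := by
            rw [Walk.getVert_zero, ← hl, Walk.getVert_length]
          have : n - 1 = b - 1 := by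
            apply hinj _ (by omega) _ (by omega)
            rw [show n - 1 + 1 = n by omega, show b - 1 + 1 = b by omega, ← h0, hab]
          omega
      · rcases Nat.eq_zero_or_pos b with rfl | hb0
        · exfalso
          have h0 : p.getVert 0 = p.getVert n := by
            rw [Walk.getVert_zero, ← hl, Walk.getVert_length]
          have : a - 1 = n - 1 := by
            apply hinj _ (by omega) _ (by omega)
            rw [show n - 1 + 1 = n by omega, show a - 1 + 1 = a by omega, ← h0, hab]
          omega
        · have : a - 1 = b - 1 := by
            apply hinj _ (by omega) _ (by omega)
            rw [show a - 1 + 1 = a by omega, show b - 1 + 1 = b by omega, hab]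
          omega
    have := key _ hvi _ hvj hij
    exact ZMod.val_injective n this
  · intro i
    have hvi := ZMod.val_lt i
    have hone : (1 : ZMod n).val = 1 := ZMod.val_one'' (by omega)
    have hadd : (i + 1).val = (i.val + 1) % n := by
      rw [ZMod.val_add, hone]
    simp only
    rcases Nat.lt_or_ge (i.val + 1) n with hlt | hge
    · rw [hadd, Nat.mod_eq_of_lt hlt]
      exact p.adj_getVert_succ (by omega)
    · have hiv : i.val = n - 1 := by omega
      have h1 : (i + 1).val = 0 := by
        rw [hadd, hiv, show n - 1 + 1 = n by omega, Nat.mod_self]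
      rw [h1, hiv]
      have h0 : p.getVert 0 = p.getVert n := by
        rw [Walk.getVert_zero, ← hl, Walk.getVert_length]
      rw [h0, show n = (n-1) + 1 by omega]
      exact p.adj_getVert_succ (by omega)

lemma cycle_of_cycIdx {n : ℕ} (hn : 3 ≤ n) (h : CycIdx G n) :
    ∃ (u : V) (p : G.Walk u u), p.IsCycle ∧ p.length = n := by
  haveI : NeZero n := ⟨by omega⟩
  obtain ⟨f, hinj, hadj⟩ := h
  set c : ℕ → V := fun r => f (r : ZMod n) with hc
  have hcc : ∀ r < n, G.Adj (c r) (c (r+1)) := by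
    intro r _
    have : ((r+1 : ℕ) : ZMod n) = (r : ZMod n) + 1 := by push_cast; ring
    rw [hc]; simp only; rw [this]; exact hadj _
  obtain ⟨w, hl, hs, he⟩ := walk_from_fn c n hcc
  have hcn : c n = c 0 := by
    rw [hc]; simp [ZMod.natCast_self]
  refine ⟨c 0, w.copy rfl hcn, ?_, by simpa using hl⟩
  rw [Walk.isCycle_def, Walk.isTrail_def]
  have hnodupr : (List.range n).Nodup := List.nodup_range
  refine ⟨?_, ?_, ?_⟩
  · -- edges nodup
    rw [Walk.edges_copy, he]
    apply List.Nodup.map_on ?_ hnodupr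
    intro x hx y hy hxy
    rw [List.mem_range] at hx hy
    rw [Sym2.eq_iff] at hxy
    have hcast : ∀ a : ℕ, ((a+1 : ℕ) : ZMod n) = (a : ZMod n) + 1 := by
      intro a; push_cast; ring
    rcases hxy with ⟨h1, h2⟩ | ⟨h1, h2⟩
    · exact natCast_zmod_inj hx hy (hinj h1)
    · exfalso
      have e1 : (x : ZMod n) = (y : ZMod n) + 1 := by
        have := hinj h1; rwa [hcast y] at this
      have e2 : (x : ZMod n) + 1 = (y : ZMod n) := by
        have := hinj h2; rwa [hcast x] at this
      have : (x : ZMod n) = (x : ZMod n) + 1 + 1 := by rw [e2, ← e1]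
      have h0 : (0 : ZMod n) = 2 := by linear_combination this
      have h2z : ((2 : ℕ) : ZMod n) = 0 := by push_cast; exact h0.symm
      rw [ZMod.natCast_eq_zero_iff] at h2z
      have := Nat.le_of_dvd (by norm_num) h2z
      omega
  · -- not nil
    intro hnil
    have : w.length = 0 := by
      have := congrArg Walk.length hnil
      simpa using this
    omega
  · -- support tail nodup
    rw [Walk.support_copy, hs, List.range_succ_eq_map]
    simp only [List.map_cons, List.tail_cons, List.map_map]
    apply List.Nodup.map_on ?_ hnodupr
    intro x hx y hy hxy
    rw [List.mem_range] at hx hy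
    simp only [Function.comp] at hxy
    have h1 : ((x+1 : ℕ) : ZMod n) = ((y+1 : ℕ) : ZMod n) := hinj hxy
    have h2 : (x : ZMod n) = (y : ZMod n) := by
      push_cast at h1
      exact add_right_cancel h1
    exact natCast_zmod_inj hx hy h2

end WalkFn

section TD

variable {V : Type*} {G : SimpleGraph V}

lemma treedepth_path_bound {h : ℕ} (htd : treedepthLE G h) (m : ℕ) (c : ℕ → V)
    (hadj : ∀ r < m, G.Adj (c r) (c (r+1)))
    (hinj : ∀ r ≤ m, ∀ r' ≤ m, c r = c r' → r = r') :
    m + 1 ≤ 2 ^ h - 1 := by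
  obtain ⟨par, dep, hpd, hdep, hedge⟩ := htd
  set anc : V → V → Prop := fun u v => ∃ k, par^[k] v = u with hanc
  have hF1 : ∀ k v, dep (par^[k] v) ≤ dep v ∧ (par^[k] v ≠ v → dep (par^[k] v) < dep v) := by
    intro k
    induction k with
    | zero => intro v; simp
    | succ k ih =>
      intro v
      rw [Function.iterate_succ_apply]
      by_cases hfix : par v = v
      · rw [hfix]; exact ih v
      · have h1 : dep v = dep (par v) + 1 := (hpd v).2 hfix
        have h2 := ih (par v)
        constructor
        · omega
        · intro _; omega
  have hF1' : ∀ u v, anc u v → u ≠ v → dep u < dep v := by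
    rintro u v ⟨k, hk⟩ hne
    have := (hF1 k v).2 (by rw [hk]; exact hne)
    rwa [hk] at this
  have htrans : ∀ u v w, anc u v → anc v w → anc u w := by
    rintro u v w ⟨k1, hk1⟩ ⟨k2, hk2⟩
    exact ⟨k1 + k2, by rw [Function.iterate_add_apply, hk2, hk1]⟩
  have hcomp : ∀ a a' v, anc a v → anc a' v → anc a a' ∨ anc a' a := by
    rintro a a' v ⟨k, hk⟩ ⟨k', hk'⟩
    rcases Nat.le_total k k' with hle | hle
    · right
      refine ⟨k' - k, ?_⟩
      rw [← hk, ← Function.iterate_add_apply, show k' - k + k = k' by omega]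
      exact hk'
    · left
      refine ⟨k - k', ?_⟩
      rw [← hk', ← Function.iterate_add_apply, show k - k' + k' = k by omega]
      exact hk
  have hstep : ∀ v x y, G.Adj x y → anc v x → dep v ≤ dep y → anc v y := by
    intro v x y hxy hvx hd
    rcases hedge x y hxy with ⟨k, hk⟩ | ⟨k, hk⟩
    · -- anc x y
      exact htrans v x y hvx ⟨k, hk⟩
    · -- anc y x
      rcases hcomp v y x hvx ⟨k, hk⟩ with h1 | h1
      · exact h1
      · by_cases hvy : y = v
        · exact ⟨0, hvy⟩
        · have := hF1' y v h1 hvy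
          omega
  -- main bound by induction on k
  have main : ∀ k : ℕ, ∀ D m : ℕ, ∀ c : ℕ → V, (∀ r < m, G.Adj (c r) (c (r+1))) →
      (∀ r ≤ m, ∀ r' ≤ m, c r = c r' → r = r') → (∀ r ≤ m, D ≤ dep (c r)) →
      h + 1 ≤ D + k → m + 1 ≤ 2 ^ k - 1 := by
    intro k
    induction k with
    | zero =>
      intro D m c _ _ hD hk
      have h1 := hD 0 (by omega)
      have h2 := hdep (c 0)
      omega
    | succ k ih =>
      intro D m c hadj hinj hD hk
      obtain ⟨j₀, hj₀mem, hmin⟩ :=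
        Finset.exists_min_image (Finset.range (m+1)) (fun j => dep (c j)) ⟨0, by simp⟩
      rw [Finset.mem_range] at hj₀mem
      have hj₀ : j₀ ≤ m := by omega
      have hmin' : ∀ j ≤ m, dep (c j₀) ≤ dep (c j) := by
        intro j hj
        exact hmin j (Finset.mem_range.mpr (by omega))
      -- ancestor property
      have hR : ∀ r, j₀ + r ≤ m → anc (c j₀) (c (j₀ + r)) := by
        intro r
        induction r with
        | zero => intro _; exact ⟨0, rfl⟩
        | succ r ihr =>
          intro hr
          refine hstep _ _ _ (hadj (j₀ + r) (by omega)) (ihr (by omega)) ?_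
          exact hmin' _ (by omega)
      have hL : ∀ r, r ≤ j₀ → anc (c j₀) (c (j₀ - r)) := by
        intro r
        induction r with
        | zero => intro _; simpa using ⟨0, rfl⟩
        | succ r ihr =>
          intro hr
          have hadj' : G.Adj (c (j₀ - r)) (c (j₀ - (r+1))) := by
            have := hadj (j₀ - (r+1)) (by omega)
            rw [show j₀ - (r+1) + 1 = j₀ - r by omega] at this
            exact this.symm
          refine hstep _ _ _ hadj' (ihr (by omega)) ?_
          exact hmin' _ (by omega)
      have hancall : ∀ j ≤ m, anc (c j₀) (c j) := by
        intro j hj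
        rcases Nat.le_total j j₀ with h1 | h1
        · have := hL (j₀ - j) (by omega)
          rwa [show j₀ - (j₀ - j) = j by omega] at this
        · have := hR (j - j₀) (by omega)
          rwa [show j₀ + (j - j₀) = j by omega] at this
      have hDgt : ∀ j ≤ m, j ≠ j₀ → D + 1 ≤ dep (c j) := by
        intro j hj hne
        have h1 : c j ≠ c j₀ := fun hc => hne (hinj j hj j₀ hj₀ hc)
        have h2 := hF1' (c j₀) (c j) (hancall j hj) (Ne.symm h1)
        have h3 := hD j₀ hj₀
        omega
      -- left part
      have hleft : j₀ ≤ 2 ^ k - 1 := by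
        rcases Nat.eq_zero_or_pos j₀ with rfl | hpos
        · omega
        · have := ih (D+1) (j₀ - 1) c (fun r hr => hadj r (by omega))
            (fun r hr r' hr' hc => hinj r (by omega) r' (by omega) hc)
            (fun r hr => hDgt r (by omega) (by omega)) (by omega)
          omega
      have hright : m - j₀ ≤ 2 ^ k - 1 := by
        rcases Nat.lt_or_ge j₀ m with hpos | hpos
        · have := ih (D+1) (m - j₀ - 1) (fun r => c (j₀ + 1 + r))
            (fun r hr => by
              have := hadj (j₀ + 1 + r) (by omega)
              rwa [show j₀ + 1 + r + 1 = j₀ + 1 + (r + 1) by omega] at this)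
            (fun r hr r' hr' hc => by
              have := hinj (j₀ + 1 + r) (by omega) (j₀ + 1 + r') (by omega) hc
              omega)
            (fun r hr => hDgt (j₀ + 1 + r) (by omega) (by omega)) (by omega)
          omega
        · omega
      have hpow : 2 ^ (k + 1) = 2 * 2 ^ k := by rw [pow_succ]; ring
      have hpow1 : 1 ≤ 2 ^ k := Nat.one_le_two_pow
      omega
  have hD1 : ∀ v : V, 1 ≤ dep v := by
    intro v
    by_cases hfix : par v = v
    · rw [(hpd v).1 hfix]
    · rw [(hpd v).2 hfix]; omega
  exact main h 1 m c hadj hinj (fun r _ => hD1 (c r)) (by omega)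

end TD

section GlueDefs

variable {t : ℕ}

/-- Realizability of a system of vertex-disjoint boundary-to-boundary paths with
prescribed endpoints and lengths. -/
def RealSys (L : ℕ) (G : BGraph t) (A : Finset (Fin t × Fin t × Fin L)) : Prop :=
  ∃ P : (Fin t × Fin t × Fin L) → ℕ → G.V,
    (∀ a ∈ A, P a 0 = G.b a.1 ∧ P a (a.2.2 : ℕ) = G.b a.2.1 ∧
      ∀ r : ℕ, r < (a.2.2 : ℕ) → G.G.Adj (P a r) (P a (r+1))) ∧
    ∀ a ∈ A, ∀ a' ∈ A, ∀ r r' : ℕ, r ≤ (a.2.2 : ℕ) → r' ≤ (a'.2.2 : ℕ) →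
      (a ≠ a' ∨ r ≠ r') → P a r ≠ P a' r'

/-- The finite signature of a boundaried graph. -/
def sigEC (L : ℕ) (G : BGraph t) :
    Set (Finset (Fin t × Fin t × Fin L)) × Set (Fin L) :=
  ({A | RealSys L G A}, {m | CycIdx G.G (m : ℕ)})

/-- A position in the cycle whose outgoing edge is a `G₁`-edge. -/
def GposP {n : ℕ} (G₁ H : BGraph t)
    (f : ZMod n → (G₁.V ⊕ {v : H.V // v ∉ Set.range H.b})) (i : ZMod n) : Prop :=
  ∃ u v, f i = Sum.inl u ∧ f (i + 1) = Sum.inl v ∧ G₁.G.Adj u v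

lemma glue_adj_cases {G₁ H : BGraph t} {x y : G₁.V ⊕ {v : H.V // v ∉ Set.range H.b}}
    (h : (glue G₁ H).Adj x y)
    (hng : ¬ ∃ u v, x = Sum.inl u ∧ y = Sum.inl v ∧ G₁.G.Adj u v) :
    (∃ u w, x = Sum.inr u ∧ y = Sum.inr w ∧ H.G.Adj u.1 w.1) ∨
    (∃ k w, x = Sum.inl (G₁.b k) ∧ y = Sum.inr w ∧ H.G.Adj (H.b k) w.1) ∨
    (∃ k w, x = Sum.inr w ∧ y = Sum.inl (G₁.b k) ∧ H.G.Adj (H.b k) w.1) ∨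
    (∃ k k', x = Sum.inl (G₁.b k) ∧ y = Sum.inl (G₁.b k') ∧ H.G.Adj (H.b k) (H.b k')) := by
  rw [glue, SimpleGraph.fromRel_adj] at h
  obtain ⟨hne, hor⟩ := h
  rcases x with u | u <;> rcases y with v | v
  · simp only [glueAdj] at hor
    rcases hor with (hG | ⟨i, j, h1, h2, h3⟩) | (hG | ⟨i, j, h1, h2, h3⟩)
    · exact absurd ⟨u, v, rfl, rfl, hG⟩ hng
    · subst h1; subst h2
      exact Or.inr (Or.inr (Or.inr ⟨i, j, rfl, rfl, h3⟩))
    · exact absurd ⟨u, v, rfl, rfl, hG.symm⟩ hng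
    · subst h1; subst h2
      exact Or.inr (Or.inr (Or.inr ⟨j, i, rfl, rfl, h3.symm⟩))
  · simp only [glueAdj] at hor
    rcases hor with ⟨i, h1, h2⟩ | hF
    · subst h1
      exact Or.inr (Or.inl ⟨i, v, rfl, rfl, h2⟩)
    · exact hF.elim
  · simp only [glueAdj] at hor
    rcases hor with hF | ⟨i, h1, h2⟩
    · exact hF.elim
    · subst h1
      exact Or.inr (Or.inr (Or.inl ⟨i, u, rfl, rfl, h2⟩))
  · simp only [glueAdj] at hor
    rcases hor with h1 | h1
    · exact Or.inl ⟨u, v, rfl, rfl, h1⟩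
    · exact Or.inl ⟨u, v, rfl, rfl, h1.symm⟩

end GlueDefs

section Transfer

variable {t : ℕ}

lemma transfer {d L : ℕ} (hL : 2 ^ d + 2 ≤ L) (G₁ G₂ H : BGraph t)
    (htd : treedepthLE G₁.G d)
    (hreal : ∀ A, RealSys L G₁ A → RealSys L G₂ A)
    (hcyc : ∀ m : Fin L, CycIdx G₁.G (m : ℕ) → CycIdx G₂.G (m : ℕ))
    {n : ℕ} (hn : 3 ≤ n) :
    CycIdx (glue G₁ H) n → CycIdx (glue G₂ H) n := by
  classical
  rintro ⟨f, hfinj, hfadj⟩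
  haveI : NeZero n := ⟨by omega⟩
  have hne1 : ∀ i : ZMod n, i ≠ i + 1 := by
    intro i h
    have h0 : (0 : ZMod n) = 1 := by linear_combination h
    have := congrArg ZMod.val h0
    rw [ZMod.val_zero, ZMod.val_one'' (by omega : n ≠ 1)] at this
    exact absurd this (by omega)
  by_cases hall : ∀ i, GposP G₁ H f i
  · -- Case A : the cycle lies entirely in G₁
    choose u v h1 h2 h3 using hall
    have hv : ∀ i, v i = u (i + 1) := by
      intro i
      exact Sum.inl.inj ((h2 i).symm.trans (h1 (i + 1)))
    have huinj : Function.Injective u := by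
      intro a b hab
      apply hfinj
      rw [h1 a, h1 b, hab]
    have hadj' : ∀ i, G₁.G.Adj (u i) (u (i + 1)) := by
      intro i
      have := h3 i
      rwa [hv i] at this
    have hbnd : n - 1 + 1 ≤ 2 ^ d - 1 := by
      apply treedepth_path_bound htd (n - 1) (fun r => u ↑r)
      · intro r hr
        have hc : ((r + 1 : ℕ) : ZMod n) = (r : ZMod n) + 1 := by push_cast; ring
        show G₁.G.Adj (u ↑r) (u ↑(r+1))
        rw [hc]
        exact hadj' _
      · intro r hr r' hr' he
        exact natCast_zmod_inj (by omega) (by omega) (huinj he)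
    have hnL : n < L := by
      have := Nat.one_le_two_pow (n := d)
      omega
    have hc1 : CycIdx G₁.G ((⟨n, hnL⟩ : Fin L) : ℕ) := ⟨u, huinj, hadj'⟩
    obtain ⟨u₂, hu₂inj, hu₂adj⟩ := hcyc ⟨n, hnL⟩ hc1
    refine ⟨fun i => Sum.inl (u₂ i), ?_, ?_⟩
    · intro a b hab
      exact hu₂inj (Sum.inl.inj hab)
    · intro i
      rw [glue, SimpleGraph.fromRel_adj]
      refine ⟨?_, Or.inl ?_⟩
      · intro hc
        exact hne1 i (hu₂inj (Sum.inl.inj hc))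
      · exact Or.inl (hu₂adj i)
  · -- Case B : there is an H-edge; rotate so that edge n-1 is an H-edge
    push_neg at hall
    obtain ⟨i₀, hi₀⟩ := hall
    have main : ∀ f : ZMod n → (G₁.V ⊕ {v : H.V // v ∉ Set.range H.b}),
        Function.Injective f → (∀ i, (glue G₁ H).Adj (f i) (f (i + 1))) →
        ¬ GposP G₁ H f ((n - 1 : ℕ) : ZMod n) → CycIdx (glue G₂ H) n := by
      clear hfinj hfadj hi₀ i₀
      intro f hfinj hfadj hlast'
      set Q : ℕ → Prop := fun m => ¬ GposP G₁ H f ((m : ℕ) : ZMod n) with hQdef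
      have hQ_iff : ∀ m, Q m ↔ ¬ GposP G₁ H f ((m : ℕ) : ZMod n) := fun m => Iff.rfl
      have hmod : ∀ a, Q a ↔ Q (a % n) := by
        intro a
        rw [hQ_iff, hQ_iff, ZMod.natCast_mod]
      have hlast : Q (n - 1) := hlast'
      have hn1 : 1 ≤ n := by omega
      have hSpec : ∀ m, Q (m + 1 + runLen Q m) ∧ ∀ r < runLen Q m, ¬ Q (m + 1 + r) :=
        fun m => runLen_spec hmod hlast hn1 m
      have hKey : ∀ m : ℕ, m < n → Q m → ∀ r : ℕ, r ≤ runLen Q m →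
          runPrev n Q (posN n m r) = m ∧ runBack n Q (posN n m r) = r :=
        fun m hm hQm r hr => runKey hmod hlast hn1 hm hQm hr
      have hSurj : ∀ j : ℕ, j < n →
          runPrev n Q j < n ∧ Q (runPrev n Q j) ∧
          runBack n Q j ≤ runLen Q (runPrev n Q j) ∧
          posN n (runPrev n Q j) (runBack n Q j) = j :=
        fun j hj => runSurj hmod hlast hn1 hj
      have hposlt : ∀ m r, posN n m r < n := fun m r => Nat.mod_lt _ (by omega)
      have hGr : ∀ m r, r < runLen Q m → GposP G₁ H f ((m + 1 + r : ℕ) : ZMod n) :=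
        fun m r hr => not_not.mp ((hSpec m).2 r hr)
      have hposcast : ∀ m r, ((posN n m r : ℕ) : ZMod n) = ((m + 1 + r : ℕ) : ZMod n) := by
        intro m r
        rw [posN, ZMod.natCast_mod]
      have hvalcast : ∀ i : ZMod n, ((i.val : ℕ) : ZMod n) = i :=
        fun i => ZMod.natCast_rightInverse i
      have hval1 : ∀ i : ZMod n, (i + 1).val = (i.val + 1) % n := by
        intro i
        rw [ZMod.val_add, ZMod.val_one'' (by omega : n ≠ 1)]
      have hQval : ∀ i : ZMod n, ¬ GposP G₁ H f i → Q i.val := by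
        intro i h
        rw [hQ_iff, hvalcast i]
        exact h
      have hQval' : ∀ i : ZMod n, Q i.val → ¬ GposP G₁ H f i := by
        intro i h
        rw [hQ_iff, hvalcast i] at h
        exact h
      by_cases hallr : ∀ (i : ZMod n) (x : G₁.V), f i ≠ Sum.inl x
      · -- the cycle is entirely inside H
        have hexr : ∀ i : ZMod n, ∃ v, f i = Sum.inr v := by
          intro i
          rcases hfi : f i with x | v
          · exact absurd hfi (hallr i x)
          · exact ⟨v, rfl⟩
        choose vf hvf using hexr
        refine ⟨fun i => Sum.inr (vf i), ?_, ?_⟩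
        · intro i j hij
          apply hfinj
          rw [hvf i, hvf j]
          exact congrArg Sum.inr (Sum.inr.inj hij)
        · intro i
          have hng : ¬ GposP G₁ H f i := by
            rintro ⟨x, y, hx, -, -⟩
            exact hallr i x hx
          rcases glue_adj_cases (hfadj i) hng with
            ⟨a, w, hxa, hyw, hadjH⟩ | ⟨k, w, hxk, -, -⟩ | ⟨k, w, -, hyk, -⟩ | ⟨k, k', hxk, -, -⟩
          · rw [glue, SimpleGraph.fromRel_adj]
            have ha' : vf i = a := Sum.inr.inj ((hvf i).symm.trans hxa)
            have hw' : vf (i + 1) = w := Sum.inr.inj ((hvf (i + 1)).symm.trans hyw)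
            constructor
            · intro hc
              apply hne1 i
              apply hfinj
              rw [hvf i, hvf (i + 1)]
              exact congrArg Sum.inr (Sum.inr.inj hc)
            · left
              show glueAdj G₂ H _ _
              simp only [glueAdj]
              rw [ha', hw']
              exact hadjH
          · exact absurd hxk (hallr i _)
          · exact absurd hyk (hallr (i + 1) _)
          · exact absurd hxk (hallr i _)
      · -- mixed case
        push_neg at hallr
        obtain ⟨iw, xw, hxw⟩ := hallr
        haveI : Nonempty G₁.V := ⟨xw⟩
        set xf : ZMod n → G₁.V :=
          fun i => Sum.elim id (fun _ => Classical.arbitrary G₁.V) (f i) with hxfdef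
        have hxf : ∀ i x, f i = Sum.inl x → xf i = x := by
          intro i x h
          simp only [hxfdef, h, Sum.elim_inl, id]
        set SS : ℕ → Prop :=
          fun m => m < n ∧ Q m ∧ ∃ x, f ((posN n m 0 : ℕ) : ZMod n) = Sum.inl x with hSSdef
        have hSS_of_inl : ∀ i : ZMod n, (∃ x, f i = Sum.inl x) →
            SS (runPrev n Q i.val) ∧ runBack n Q i.val ≤ runLen Q (runPrev n Q i.val) ∧
            posN n (runPrev n Q i.val) (runBack n Q i.val) = i.val := by
          intro i hx
          obtain ⟨hm_lt, hQm, hrb, hpos⟩ := hSurj _ (ZMod.val_lt i)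
          refine ⟨⟨hm_lt, hQm, ?_⟩, hrb, hpos⟩
          rcases Nat.eq_zero_or_pos (runBack n Q i.val) with h0 | h0
          · rw [h0] at hpos
            rw [hpos, hvalcast i]
            exact hx
          · have h1 : 1 ≤ runLen Q (runPrev n Q i.val) := le_trans h0 hrb
            obtain ⟨u, v, hu, hv, -⟩ := hGr (runPrev n Q i.val) 0 (by omega)
            refine ⟨u, ?_⟩
            rw [hposcast]
            exact hu
        -- all run vertices are inl
        have hrunInl : ∀ m, SS m → ∀ r, r ≤ runLen Q m →
            f ((posN n m r : ℕ) : ZMod n) = Sum.inl (xf ((posN n m r : ℕ) : ZMod n)) := by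
          intro m hm r hr
          rcases Nat.eq_zero_or_pos r with rfl | hr0
          · obtain ⟨x, hx⟩ := hm.2.2
            rw [hx, hxf _ _ hx]
          · obtain ⟨u, v, hu, hv, -⟩ := hGr m (r - 1) (by omega)
            have hcast : ((posN n m r : ℕ) : ZMod n) = ((m + 1 + (r - 1) : ℕ) : ZMod n) + 1 := by
              rw [hposcast, show m + 1 + r = (m + 1 + (r - 1)) + 1 by omega]
              push_cast
              ring
            have hfv : f ((posN n m r : ℕ) : ZMod n) = Sum.inl v := by
              rw [hcast]
              exact hv
            rw [hfv, hxf _ _ hfv]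
        have hrunAdj : ∀ m, SS m → ∀ r, r < runLen Q m →
            G₁.G.Adj (xf ((posN n m r : ℕ) : ZMod n)) (xf ((posN n m (r + 1) : ℕ) : ZMod n)) := by
          intro m hm r hr
          obtain ⟨u, v, hu, hv, huv⟩ := hGr m r hr
          have hc2 : ((posN n m (r + 1) : ℕ) : ZMod n) = ((m + 1 + r : ℕ) : ZMod n) + 1 := by
            rw [hposcast]
            push_cast
            ring
          have h1 : f ((posN n m r : ℕ) : ZMod n) = Sum.inl u := by
            rw [hposcast]
            exact hu
          have h2 : f ((posN n m (r + 1) : ℕ) : ZMod n) = Sum.inl v := by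
            rw [hc2]
            exact hv
          rw [hxf _ _ h1, hxf _ _ h2]
          exact huv
        have hrunIn : ∀ m, SS m → ∀ r r', r ≤ runLen Q m → r' ≤ runLen Q m →
            xf ((posN n m r : ℕ) : ZMod n) = xf ((posN n m r' : ℕ) : ZMod n) → r = r' := by
          intro m hm r r' hr hr' he
          have h1 : f ((posN n m r : ℕ) : ZMod n) = f ((posN n m r' : ℕ) : ZMod n) := by
            rw [hrunInl m hm r hr, hrunInl m hm r' hr', he]
          have h2 : posN n m r = posN n m r' :=
            natCast_zmod_inj (hposlt _ _) (hposlt _ _) (hfinj h1)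
          have k1 := (hKey _ hm.1 hm.2.1 _ hr).2
          have k2 := (hKey _ hm.1 hm.2.1 _ hr').2
          rw [h2] at k1
          exact k1.symm.trans k2
        -- bound on run lengths
        have hrlL : ∀ m, SS m → runLen Q m < L := by
          intro m hm
          have hb := treedepth_path_bound htd (runLen Q m)
            (fun r => xf ((posN n m r : ℕ) : ZMod n))
            (fun r hr => hrunAdj m hm r hr)
            (fun r hr r' hr' he => hrunIn m hm r r' hr hr' he)
          have := Nat.one_le_two_pow (n := d)
          omega
        -- boundary indices at run endpoints
        have hbdryA : ∀ m, SS m → ∃ k, f ((posN n m 0 : ℕ) : ZMod n) = Sum.inl (G₁.b k) := by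
          intro m hm
          obtain ⟨x, hx⟩ := hm.2.2
          have hng : ¬ GposP G₁ H f ((m : ℕ) : ZMod n) := hm.2.1
          have hc : ((posN n m 0 : ℕ) : ZMod n) = ((m : ℕ) : ZMod n) + 1 := by
            rw [hposcast]
            push_cast
            ring
          rcases glue_adj_cases (hfadj ((m : ℕ) : ZMod n)) hng with
            ⟨a, w, hxa, hyw, -⟩ | ⟨k, w, -, hyw, -⟩ | ⟨k, w, -, hyk, -⟩ | ⟨k, k', -, hyk, -⟩
          · rw [← hc] at hyw
            rw [hx] at hyw
            exact (Sum.inl_ne_inr hyw).elim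
          · rw [← hc] at hyw
            rw [hx] at hyw
            exact (Sum.inl_ne_inr hyw).elim
          · refine ⟨k, ?_⟩
            rw [hc]
            exact hyk
          · refine ⟨k', ?_⟩
            rw [hc]
            exact hyk
        have hbdryC : ∀ m, SS m →
            ∃ k, f ((posN n m (runLen Q m) : ℕ) : ZMod n) = Sum.inl (G₁.b k) := by
          intro m hm
          have hinl := hrunInl m hm (runLen Q m) le_rfl
          have hng : ¬ GposP G₁ H f ((posN n m (runLen Q m) : ℕ) : ZMod n) := by
            rw [hposcast]
            exact (hSpec m).1
          rcases glue_adj_cases (hfadj ((posN n m (runLen Q m) : ℕ) : ZMod n)) hng with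
            ⟨a, w, hxa, -, -⟩ | ⟨k, w, hxk, -, -⟩ | ⟨k, w, hxw, -, -⟩ | ⟨k, k', hxk, -, -⟩
          · rw [hinl] at hxa
            exact (Sum.inl_ne_inr hxa).elim
          · exact ⟨k, hxk⟩
          · rw [hinl] at hxw
            exact (Sum.inl_ne_inr hxw).elim
          · exact ⟨k, hxk⟩
        choose Aix hAix using hbdryA
        choose Cix hCix using hbdryC
        -- a distinguished run
        obtain ⟨hSSw, -, -⟩ := hSS_of_inl iw ⟨xw, hxw⟩
        -- the arc assignment
        set arcF : ℕ → Fin t × Fin t × Fin L := fun m =>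
          if h : SS m then (Aix m h, Cix m h, ⟨runLen Q m, hrlL m h⟩)
          else (Aix _ hSSw, Cix _ hSSw, ⟨runLen Q (runPrev n Q iw.val), hrlL _ hSSw⟩)
          with harcFdef
        have harcF : ∀ m (h : SS m),
            arcF m = (Aix m h, Cix m h, ⟨runLen Q m, hrlL m h⟩) := by
          intro m h
          simp only [harcFdef, dif_pos h]
        set M : Finset (Fin t × Fin t × Fin L) :=
          ((Finset.range n).filter SS).image arcF with hMdef
        have harcM : ∀ m, SS m → arcF m ∈ M := by
          intro m hm
          rw [hMdef, Finset.mem_image]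
          exact ⟨m, Finset.mem_filter.mpr ⟨Finset.mem_range.mpr hm.1, hm⟩, rfl⟩
        have harcInj : ∀ m m' (hm : SS m) (hm' : SS m'), arcF m = arcF m' → m = m' := by
          intro m m' hm hm' he
          rw [harcF m hm, harcF m' hm'] at he
          have hA : Aix m hm = Aix m' hm' := congrArg (fun p => p.1) he
          have h3 : f ((posN n m 0 : ℕ) : ZMod n) = f ((posN n m' 0 : ℕ) : ZMod n) := by
            rw [hAix m hm, hAix m' hm', hA]
          have h4 : posN n m 0 = posN n m' 0 :=
            natCast_zmod_inj (hposlt _ _) (hposlt _ _) (hfinj h3)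
          have k1 := (hKey _ hm.1 hm.2.1 _ (Nat.zero_le (runLen Q m))).1
          have k2 := (hKey _ hm'.1 hm'.2.1 _ (Nat.zero_le (runLen Q m'))).1
          rw [h4] at k1
          exact k1.symm.trans k2
        -- pick function
        set pick : (Fin t × Fin t × Fin L) → ℕ := fun a =>
          if h : ∃ m, SS m ∧ arcF m = a then h.choose else runPrev n Q iw.val with hpickdef
        have hpick : ∀ a ∈ M, SS (pick a) ∧ arcF (pick a) = a := by
          intro a ha
          rw [hMdef, Finset.mem_image] at ha
          obtain ⟨m, hm, he⟩ := ha
          rw [Finset.mem_filter] at hm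
          have hex : ∃ m, SS m ∧ arcF m = a := ⟨m, hm.2, he⟩
          simp only [hpickdef, dif_pos hex]
          exact hex.choose_spec
        have hlenM : ∀ a (ha : a ∈ M), (a.2.2 : ℕ) = runLen Q (pick a) := by
          intro a ha
          obtain ⟨h1, h2⟩ := hpick a ha
          have heq := h2.symm.trans (harcF _ h1)
          exact congrArg (fun p => (p.2.2 : ℕ)) heq
        -- realizability in G₁
        have hRS1 : RealSys L G₁ M := by
          refine ⟨fun a r => xf ((posN n (pick a) r : ℕ) : ZMod n), ?_, ?_⟩
          · intro a ha
            obtain ⟨hSm, he⟩ := hpick a ha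
            have heq := he.symm.trans (harcF _ hSm)
            have e1 : a.1 = Aix _ hSm := congrArg (fun p => p.1) heq
            have e21 : a.2.1 = Cix _ hSm := congrArg (fun p => p.2.1) heq
            have e22 : (a.2.2 : ℕ) = runLen Q (pick a) := hlenM a ha
            refine ⟨?_, ?_, ?_⟩
            · show xf ((posN n (pick a) 0 : ℕ) : ZMod n) = G₁.b a.1
              rw [e1, hxf _ _ (hAix _ hSm)]
            · show xf ((posN n (pick a) (a.2.2 : ℕ) : ℕ) : ZMod n) = G₁.b a.2.1
              rw [e21, e22, hxf _ _ (hCix _ hSm)]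
            · intro r hr
              show G₁.G.Adj (xf ((posN n (pick a) r : ℕ) : ZMod n))
                (xf ((posN n (pick a) (r+1) : ℕ) : ZMod n))
              rw [e22] at hr
              exact hrunAdj _ hSm r hr
          · intro a ha a' ha' r r' hr hr' hne he
            obtain ⟨hSm, hea⟩ := hpick a ha
            obtain ⟨hSm', hea'⟩ := hpick a' ha'
            rw [hlenM a ha] at hr
            rw [hlenM a' ha'] at hr'
            have he' : xf ((posN n (pick a) r : ℕ) : ZMod n)
                = xf ((posN n (pick a') r' : ℕ) : ZMod n) := he
            have h1 : f ((posN n (pick a) r : ℕ) : ZMod n)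
                = f ((posN n (pick a') r' : ℕ) : ZMod n) := by
              rw [hrunInl _ hSm r hr, hrunInl _ hSm' r' hr', he']
            have h2 : posN n (pick a) r = posN n (pick a') r' :=
              natCast_zmod_inj (hposlt _ _) (hposlt _ _) (hfinj h1)
            have k1 := hKey _ hSm.1 hSm.2.1 _ hr
            have k2 := hKey _ hSm'.1 hSm'.2.1 _ hr'
            rw [h2] at k1
            have hmm : pick a = pick a' := k1.1.symm.trans k2.1
            have hrr : r = r' := k1.2.symm.trans k2.2
            rcases hne with hne | hne
            · apply hne
              rw [← hea, ← hea', hmm]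
            · exact hne hrr
        obtain ⟨P₂, hP₂a, hP₂b⟩ := hreal M hRS1
        -- the transferred cycle
        set g : ZMod n → (G₂.V ⊕ {v : H.V // v ∉ Set.range H.b}) := fun i =>
          Sum.elim
            (fun _ : G₁.V =>
              (Sum.inl (P₂ (arcF (runPrev n Q i.val)) (runBack n Q i.val)) :
                G₂.V ⊕ {v : H.V // v ∉ Set.range H.b}))
            (fun v => Sum.inr v) (f i) with hgdef
        have hg_inl : ∀ i x, f i = Sum.inl x →
            g i = Sum.inl (P₂ (arcF (runPrev n Q i.val)) (runBack n Q i.val)) := by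
          intro i x h
          simp only [hgdef, h, Sum.elim_inl]
        have hg_inr : ∀ i v, f i = Sum.inr v → g i = Sum.inr v := by
          intro i v h
          simp only [hgdef, h, Sum.elim_inr]
        -- end of run: g maps a boundary vertex whose outgoing edge is an H-edge correctly
        have hend : ∀ (i : ZMod n) (k : Fin t), f i = Sum.inl (G₁.b k) →
            ¬ GposP G₁ H f i → g i = Sum.inl (G₂.b k) := by
          intro i k hik hngp
          obtain ⟨hSSi, hri, hpi⟩ := hSS_of_inl i ⟨_, hik⟩
          have hre : runBack n Q i.val = runLen Q (runPrev n Q i.val) := by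
            rcases Nat.lt_or_ge (runBack n Q i.val) (runLen Q (runPrev n Q i.val)) with h | h
            · exfalso
              have hG := hGr _ _ h
              rw [← hposcast, hpi, hvalcast i] at hG
              exact hngp hG
            · omega
          have hposi : ((posN n (runPrev n Q i.val) (runLen Q (runPrev n Q i.val)) : ℕ) :
              ZMod n) = i := by
            rw [← hre, hpi, hvalcast i]
          have hCk : Cix _ hSSi = k := by
            have hc := hCix _ hSSi
            rw [hposi] at hc
            exact G₁.binj (Sum.inl.inj (hc.symm.trans hik))
          rw [hg_inl i _ hik]
          have harc := harcF _ hSSi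
          have h2 := (hP₂a (arcF (runPrev n Q i.val)) (harcM _ hSSi)).2.1
          have e22 : (((arcF (runPrev n Q i.val)).2.2 : Fin L) : ℕ)
              = runLen Q (runPrev n Q i.val) := congrArg (fun p => (p.2.2 : ℕ)) harc
          have e21 : (arcF (runPrev n Q i.val)).2.1 = Cix _ hSSi :=
            congrArg (fun p => p.2.1) harc
          rw [hre, ← e22, h2, e21, hCk]
        -- start of run
        have hstart : ∀ (i : ZMod n) (k : Fin t), f (i + 1) = Sum.inl (G₁.b k) →
            ¬ GposP G₁ H f i → g (i + 1) = Sum.inl (G₂.b k) := by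
          intro i k hik hngp
          have hQi : Q i.val := hQval i hngp
          have hpos0 : posN n i.val 0 = (i + 1).val := by
            rw [posN, Nat.add_zero, hval1]
          have hseed : f ((posN n i.val 0 : ℕ) : ZMod n) = Sum.inl (G₁.b k) := by
            have hc : ((posN n i.val 0 : ℕ) : ZMod n) = i + 1 := by
              rw [hposcast]
              push_cast
              rw [hvalcast i]
              ring
            rw [hc]
            exact hik
          have hSS0 : SS i.val := ⟨ZMod.val_lt i, hQi, ⟨_, hseed⟩⟩
          have hkey0 := hKey _ (ZMod.val_lt i) hQi _ (Nat.zero_le (runLen Q i.val))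
          rw [hpos0] at hkey0
          have hAk : Aix _ hSS0 = k := by
            have ha := hAix _ hSS0
            exact G₁.binj (Sum.inl.inj (ha.symm.trans hseed))
          rw [hg_inl (i + 1) _ hik, hkey0.1, hkey0.2]
          have harc := harcF _ hSS0
          have h2 := (hP₂a (arcF i.val) (harcM _ hSS0)).1
          have e1 : (arcF i.val).1 = Aix _ hSS0 := congrArg (fun p => p.1) harc
          rw [h2, e1, hAk]
        -- assemble
        refine ⟨g, ?_, ?_⟩
        · -- injectivity
          intro i j hgij
          rcases hfi : f i with x | v <;> rcases hfj : f j with y | w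
          · rw [hg_inl i x hfi, hg_inl j y hfj] at hgij
            have hPeq := Sum.inl.inj hgij
            obtain ⟨hSSi, hri, hpi⟩ := hSS_of_inl i ⟨x, hfi⟩
            obtain ⟨hSSj, hrj, hpj⟩ := hSS_of_inl j ⟨y, hfj⟩
            have hmem_i := harcM _ hSSi
            have hmem_j := harcM _ hSSj
            have hlc_i : (((arcF (runPrev n Q i.val)).2.2 : Fin L) : ℕ)
                = runLen Q (runPrev n Q i.val) :=
              congrArg (fun p => (p.2.2 : ℕ)) (harcF _ hSSi)
            have hlc_j : (((arcF (runPrev n Q j.val)).2.2 : Fin L) : ℕ)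
                = runLen Q (runPrev n Q j.val) :=
              congrArg (fun p => (p.2.2 : ℕ)) (harcF _ hSSj)
            have hlen_i : runBack n Q i.val
                ≤ (((arcF (runPrev n Q i.val)).2.2 : Fin L) : ℕ) := by
              rw [hlc_i]; exact hri
            have hlen_j : runBack n Q j.val
                ≤ (((arcF (runPrev n Q j.val)).2.2 : Fin L) : ℕ) := by
              rw [hlc_j]; exact hrj
            by_cases hac : arcF (runPrev n Q i.val) = arcF (runPrev n Q j.val)
              ∧ runBack n Q i.val = runBack n Q j.val
            · have hmm := harcInj _ _ hSSi hSSj hac.1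
              have hvv : i.val = j.val := by
                rw [← hpi, ← hpj, hmm, hac.2]
              exact ZMod.val_injective n hvv
            · have hne' : arcF (runPrev n Q i.val) ≠ arcF (runPrev n Q j.val)
                  ∨ runBack n Q i.val ≠ runBack n Q j.val := by tauto
              exact absurd hPeq (hP₂b _ hmem_i _ hmem_j _ _ hlen_i hlen_j hne')
          · rw [hg_inl i x hfi, hg_inr j w hfj] at hgij
            exact (Sum.inl_ne_inr hgij).elim
          · rw [hg_inr i v hfi, hg_inl j y hfj] at hgij
            exact (Sum.inr_ne_inl hgij).elim
          · rw [hg_inr i v hfi, hg_inr j w hfj] at hgij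
            apply hfinj
            rw [hfi, hfj]
            exact congrArg Sum.inr (Sum.inr.inj hgij)
        · -- adjacency
          intro i
          by_cases hGp : GposP G₁ H f i
          · obtain ⟨x, y, hx, hy, hxy⟩ := hGp
            obtain ⟨hSSi, hri, hpi⟩ := hSS_of_inl i ⟨x, hx⟩
            have hrlt : runBack n Q i.val < runLen Q (runPrev n Q i.val) := by
              rcases Nat.lt_or_ge (runBack n Q i.val) (runLen Q (runPrev n Q i.val)) with h | h
              · exact h
              · exfalso
                have hre : runBack n Q i.val = runLen Q (runPrev n Q i.val) := by omega
                have hQe : Q (runPrev n Q i.val + 1 + runBack n Q i.val) := by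
                  rw [hre]
                  exact (hSpec _).1
                apply hQe
                show GposP G₁ H f _
                have hc : ((runPrev n Q i.val + 1 + runBack n Q i.val : ℕ) : ZMod n) = i := by
                  rw [← hposcast, hpi, hvalcast i]
                rw [hc]
                exact ⟨x, y, hx, hy, hxy⟩
            have hkey2 := hKey _ hSSi.1 hSSi.2.1 _
              (show runBack n Q i.val + 1 ≤ runLen Q (runPrev n Q i.val) by omega)
            have hpos1 : posN n (runPrev n Q i.val) (runBack n Q i.val + 1) = (i + 1).val := by
              rw [hval1]
              conv_rhs => rw [← hpi]
              simp only [posN]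
              rw [show runPrev n Q i.val + 1 + (runBack n Q i.val + 1)
                  = (runPrev n Q i.val + 1 + runBack n Q i.val) + 1 by omega]
              rw [Nat.add_mod (runPrev n Q i.val + 1 + runBack n Q i.val) 1 n,
                Nat.mod_eq_of_lt (show 1 < n by omega)]
            have hrp1 : runPrev n Q (i + 1).val = runPrev n Q i.val := by
              rw [← hpos1]
              exact hkey2.1
            have hrb1 : runBack n Q (i + 1).val = runBack n Q i.val + 1 := by
              rw [← hpos1]
              exact hkey2.2
            rw [hg_inl i x hx, hg_inl (i + 1) y hy, hrp1, hrb1]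
            rw [glue, SimpleGraph.fromRel_adj]
            have hmemM := harcM _ hSSi
            have hlen : (((arcF (runPrev n Q i.val)).2.2 : Fin L) : ℕ)
                = runLen Q (runPrev n Q i.val) :=
              congrArg (fun p => (p.2.2 : ℕ)) (harcF _ hSSi)
            constructor
            · intro hcontr
              exact hP₂b _ hmemM _ hmemM _ _ (by omega) (by rw [hlen]; omega)
                (Or.inr (by omega)) (Sum.inl.inj hcontr)
            · left
              show glueAdj G₂ H _ _
              simp only [glueAdj]
              left
              exact (hP₂a _ hmemM).2.2 _ (by rw [hlen]; omega)
          · rcases glue_adj_cases (hfadj i) hGp with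
              ⟨a, w, hxa, hyw, hadjH⟩ | ⟨k, w, hxk, hyw, hadjH⟩ |
              ⟨k, w, hxw, hyk, hadjH⟩ | ⟨k, k', hxk, hyk, hadjH⟩
            · rw [hg_inr i a hxa, hg_inr (i + 1) w hyw]
              rw [glue, SimpleGraph.fromRel_adj]
              constructor
              · intro hc
                apply hne1 i
                apply hfinj
                rw [hxa, hyw]
                exact congrArg Sum.inr (Sum.inr.inj hc)
              · left
                show glueAdj G₂ H _ _
                simp only [glueAdj]
                exact hadjH
            · rw [hend i k hxk hGp, hg_inr (i + 1) w hyw]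
              rw [glue, SimpleGraph.fromRel_adj]
              refine ⟨by simp, Or.inl ?_⟩
              show glueAdj G₂ H _ _
              simp only [glueAdj]
              exact ⟨k, rfl, hadjH⟩
            · rw [hg_inr i w hxw, hstart i k hyk hGp]
              rw [glue, SimpleGraph.fromRel_adj]
              refine ⟨by simp, Or.inr ?_⟩
              show glueAdj G₂ H _ _
              simp only [glueAdj]
              exact ⟨k, rfl, hadjH⟩
            · rw [hend i k hxk hGp, hstart i k' hyk hGp]
              rw [glue, SimpleGraph.fromRel_adj]
              constructor
              · intro hc
                have hkk : k = k' := G₂.binj (Sum.inl.inj hc)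
                apply hne1 i
                apply hfinj
                rw [hxk, hyk, hkk]
              · left
                show glueAdj G₂ H _ _
                simp only [glueAdj]
                exact Or.inr ⟨k, k', rfl, rfl, hadjH⟩

    -- apply main to the rotation
    refine main (fun i => f (i + (i₀ + 1))) ?_ ?_ ?_
    · intro a b hab
      have := hfinj hab
      exact add_right_cancel this
    · intro i
      have he : (i + 1) + (i₀ + 1) = (i + (i₀ + 1)) + 1 := by ring
      show (glue G₁ H).Adj (f (i + (i₀ + 1))) (f ((i + 1) + (i₀ + 1)))
      rw [he]
      exact hfadj _
    · intro hGp
      apply hi₀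
      obtain ⟨x, y, hx, hy, hxy⟩ := hGp
      have hm1 : ((n - 1 : ℕ) : ZMod n) + 1 = 0 := by
        rw [show ((n - 1 : ℕ) : ZMod n) + 1 = ((n - 1 + 1 : ℕ) : ZMod n) by push_cast; ring,
          show n - 1 + 1 = n by omega, ZMod.natCast_self]
      refine ⟨x, y, ?_, ?_, hxy⟩
      · have e : ((n - 1 : ℕ) : ZMod n) + (i₀ + 1) = i₀ := by
          rw [← add_assoc, add_comm ((n - 1 : ℕ) : ZMod n) i₀, add_assoc, hm1, add_zero]
        have hx' : f (((n - 1 : ℕ) : ZMod n) + (i₀ + 1)) = Sum.inl x := hx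
        rwa [e] at hx'
      · have e : (((n - 1 : ℕ) : ZMod n) + 1) + (i₀ + 1) = i₀ + 1 := by
          rw [hm1, zero_add]
        have hy' : f ((((n - 1 : ℕ) : ZMod n) + 1) + (i₀ + 1)) = Sum.inl y := hy
        rwa [e] at hy'

end Transfer

section Assembly

variable {t : ℕ}

lemma ecequiv_of_sig {d L : ℕ} (hL : 2 ^ d + 2 ≤ L) (G₁ G₂ : BGraph t)
    (h1 : treedepthLE G₁.G d) (h2 : treedepthLE G₂.G d)
    (hsig : sigEC L G₁ = sigEC L G₂) : ECEquiv G₁ G₂ := by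
  have hreal12 : ∀ A, RealSys L G₁ A → RealSys L G₂ A := by
    intro A hA
    have hf := congrArg Prod.fst hsig
    simp only [sigEC] at hf
    rw [Set.ext_iff] at hf
    exact (hf A).mp hA
  have hreal21 : ∀ A, RealSys L G₂ A → RealSys L G₁ A := by
    intro A hA
    have hf := congrArg Prod.fst hsig
    simp only [sigEC] at hf
    rw [Set.ext_iff] at hf
    exact (hf A).mpr hA
  have hcyc12 : ∀ m : Fin L, CycIdx G₁.G (m : ℕ) → CycIdx G₂.G (m : ℕ) := by
    intro m hm
    have hf := congrArg Prod.snd hsig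
    simp only [sigEC] at hf
    rw [Set.ext_iff] at hf
    exact (hf m).mp hm
  have hcyc21 : ∀ m : Fin L, CycIdx G₂.G (m : ℕ) → CycIdx G₁.G (m : ℕ) := by
    intro m hm
    have hf := congrArg Prod.snd hsig
    simp only [sigEC] at hf
    rw [Set.ext_iff] at hf
    exact (hf m).mpr hm
  refine ⟨0, fun H ℓ => ?_⟩
  rw [add_zero]
  constructor
  · rintro ⟨u, p, hc, hl⟩
    have h3 : 3 ≤ p.length := hc.three_le_length
    obtain ⟨u', p', hc', hl'⟩ := cycle_of_cycIdx h3
      (transfer hL G₁ G₂ H h1 hreal12 hcyc12 h3 (cycIdx_of_cycle h3 hc rfl))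
    exact ⟨u', p', hc', by rw [hl']; exact hl⟩
  · rintro ⟨u, p, hc, hl⟩
    have h3 : 3 ≤ p.length := hc.three_le_length
    obtain ⟨u', p', hc', hl'⟩ := cycle_of_cycIdx h3
      (transfer hL G₂ G₁ H h2 hreal21 hcyc21 h3 (cycIdx_of_cycle h3 hc rfl))
    exact ⟨u', p', hc', by rw [hl']; exact hl⟩

end Assembly


/-- Exact Cycle has finite integer index on graphs of treedepth at most `d`. -/
theorem exactCycle_finite_integer_index (t d : ℕ) :
    ∃ R : Set (BGraph t), R.Finite ∧
      ∀ G : BGraph t, treedepthLE G.G d → ∃ R₀ ∈ R, ECEquiv G R₀ := by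
  classical
  set L := 2 ^ d + 2 with hLdef
  let T := {σ : Set (Finset (Fin t × Fin t × Fin L)) × Set (Fin L) //
    ∃ G : BGraph t, treedepthLE G.G d ∧ sigEC L G = σ}
  haveI : Finite T := Subtype.finite
  let rep : T → BGraph t := fun σ => σ.2.choose
  refine ⟨Set.range rep, Set.finite_range rep, ?_⟩
  intro G hG
  have hmem : ∃ G' : BGraph t, treedepthLE G'.G d ∧ sigEC L G' = sigEC L G := ⟨G, hG, rfl⟩
  refine ⟨rep ⟨sigEC L G, hmem⟩, ⟨_, rfl⟩, ?_⟩
  obtain ⟨htd', hsig'⟩ := hmem.choose_spec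
  exact ecequiv_of_sig hLdef.ge G _ hG htd' hsig'.symm
end
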